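/- arXiv:1804.00989 — 9 statements merged into one kernel-verified Lean document; each statement's English description precedes it below -/
import Mathlib

section
/- Let b* minimize ‖Xb‖₂²/n over the set {b : ‖b_S‖₁ − ‖b_{−S}‖₁ = 1}, and assume κ̂(u,S) > 0 for some 0 ≤ u < 1. Then ‖b*_S‖₁ ≤ (κ̂(S) − u·κ̂(u,S)) / ((1−u)·κ̂(u,S)), where κ̂(v,S)² = min{ |S|·‖Xb‖²/n : ‖b_S‖₁ − v‖b_{−S}‖₁ = 1 } and κ̂(S) = κ̂(1,S). -/
open Finset

noncomputable def l1 {p : ℕ} (b : Fin p → ℝ) : ℝ := ∑ j, |b j|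

def restr {p : ℕ} (S : Finset (Fin p)) (b : Fin p → ℝ) : Fin p → ℝ :=
  fun j => if j ∈ S then b j else 0

noncomputable def qf {n p : ℕ} (X : Matrix (Fin n) (Fin p) ℝ) (b : Fin p → ℝ) : ℝ :=
  ∑ i, (X.mulVec b i) ^ 2

/-- The compatibility constant κ̂(v,S) (square root of the minimal value). -/
noncomputable def kappaHat {n p : ℕ} (X : Matrix (Fin n) (Fin p) ℝ) (S : Finset (Fin p))
    (v : ℝ) : ℝ :=
  Real.sqrt (sInf {c : ℝ | ∃ b : Fin p → ℝ,
    l1 (restr S b) - v * l1 (restr Sᶜ b) = 1 ∧ c = (S.card : ℝ) * qf X b / n})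

lemma l1_nonneg {p : ℕ} (b : Fin p → ℝ) : 0 ≤ l1 b :=
  Finset.sum_nonneg fun _ _ => abs_nonneg _

lemma qf_nonneg {n p : ℕ} (X : Matrix (Fin n) (Fin p) ℝ) (b : Fin p → ℝ) : 0 ≤ qf X b :=
  Finset.sum_nonneg fun _ _ => sq_nonneg _

lemma restr_div {p : ℕ} (S : Finset (Fin p)) (b : Fin p → ℝ) (k : ℝ) :
    restr S (fun j => b j / k) = fun j => restr S b j / k := by
  funext j; simp only [restr]; split <;> simp

lemma l1_div {p : ℕ} (b : Fin p → ℝ) (k : ℝ) (hk : 0 < k) :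
    l1 (fun j => b j / k) = l1 b / k := by
  simp [l1, abs_div, abs_of_pos hk, Finset.sum_div]

lemma qf_div {n p : ℕ} (X : Matrix (Fin n) (Fin p) ℝ) (b : Fin p → ℝ) (k : ℝ) :
    qf X (fun j => b j / k) = qf X b / k ^ 2 := by
  have h : (fun j => b j / k) = k⁻¹ • b := by
    funext j; simp [div_eq_inv_mul]
  rw [h]
  simp only [qf, Matrix.mulVec_smul, Pi.smul_apply, smul_eq_mul, mul_pow, ← Finset.mul_sum]
  ring

theorem stmt1 {n p : ℕ} (X : Matrix (Fin n) (Fin p) ℝ) (S : Finset (Fin p))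
    (bstar : Fin p → ℝ)
    (hcon : l1 (restr S bstar) - l1 (restr Sᶜ bstar) = 1)
    (hmin : ∀ b : Fin p → ℝ, l1 (restr S b) - l1 (restr Sᶜ b) = 1 →
      qf X bstar / n ≤ qf X b / n)
    (u : ℝ) (hu0 : 0 ≤ u) (hu1 : u < 1) (hk : 0 < kappaHat X S u) :
    l1 (restr S bstar) ≤
      (kappaHat X S 1 - u * kappaHat X S u) / ((1 - u) * kappaHat X S u) := by
  set s := l1 (restr S bstar) with hs
  set r := l1 (restr Sᶜ bstar) with hrdef
  have hr : 0 ≤ r := l1_nonneg _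
  have hs1 : 1 ≤ s := by linarith
  set k := s - u * r with hkdef
  have hkpos : 0 < k := by nlinarith
  set q := (S.card : ℝ) * qf X bstar / n with hq
  have hq0 : 0 ≤ q :=
    div_nonneg (mul_nonneg (Nat.cast_nonneg _) (qf_nonneg _ _)) (Nat.cast_nonneg _)
  -- the scaled vector is feasible for level u
  have hmem_u : q / k ^ 2 ∈ {c : ℝ | ∃ b : Fin p → ℝ,
      l1 (restr S b) - u * l1 (restr Sᶜ b) = 1 ∧ c = (S.card : ℝ) * qf X b / n} := by
    refine ⟨fun j => bstar j / k, ?_, ?_⟩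
    · rw [restr_div, restr_div, l1_div _ _ hkpos, l1_div _ _ hkpos]
      field_simp
      exact hkdef.symm
    · rw [qf_div, hq]
      ring
  have hbdd_u : BddBelow {c : ℝ | ∃ b : Fin p → ℝ,
      l1 (restr S b) - u * l1 (restr Sᶜ b) = 1 ∧ c = (S.card : ℝ) * qf X b / n} := by
    refine ⟨0, ?_⟩
    rintro c ⟨b, -, rfl⟩
    exact div_nonneg (mul_nonneg (Nat.cast_nonneg _) (qf_nonneg _ _)) (Nat.cast_nonneg _)
  have h1 : kappaHat X S u ≤ Real.sqrt (q / k ^ 2) :=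
    Real.sqrt_le_sqrt (csInf_le hbdd_u hmem_u)
  -- lower bound for level 1
  have h2 : Real.sqrt q ≤ kappaHat X S 1 := by
    apply Real.sqrt_le_sqrt
    apply le_csInf
    · exact ⟨q, bstar, by rw [one_mul]; exact hcon, rfl⟩
    · rintro c ⟨b, hb, rfl⟩
      rw [one_mul] at hb
      rw [hq, mul_div_assoc, mul_div_assoc]
      exact mul_le_mul_of_nonneg_left (hmin b hb) (Nat.cast_nonneg _)
  have h3 : Real.sqrt (q / k ^ 2) = Real.sqrt q / k := by
    rw [Real.sqrt_div hq0, Real.sqrt_sq hkpos.le]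
  rw [h3] at h1
  have h4 : kappaHat X S u * k ≤ Real.sqrt q := by
    rw [← le_div_iff₀ hkpos]; exact h1
  have h5 : kappaHat X S u * k ≤ kappaHat X S 1 := h4.trans h2
  have hpos : 0 < (1 - u) * kappaHat X S u := mul_pos (by linarith) hk
  rw [le_div_iff₀ hpos]
  have hru : r = s - 1 := by linarith
  have h6 : kappaHat X S u * k = s * ((1 - u) * kappaHat X S u) + u * kappaHat X S u := by
    rw [hkdef, hru]; ring
  linarith [h5]
end

section
/- For any v > u > 0 and any S ⊆ {1,…,p}: κ̂²(v,S) ≥ min{ |S|·‖Xb‖₂²/n : ‖b_S‖₁ − u‖b_{−S}‖₁ = 1 and ‖b‖₁ ≤ 1 + (1+u)/(v−u) }. That is, for vectors in the tighter cone one may additionally assume an ℓ₁-norm bound. -/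
open Finset

lemma l1_smul {p : ℕ} (t : ℝ) (b : Fin p → ℝ) : l1 (fun j => t * b j) = |t| * l1 b := by
  unfold l1
  rw [Finset.mul_sum]
  exact Finset.sum_congr rfl fun j _ => abs_mul t (b j)

lemma restr_smul {p : ℕ} (S : Finset (Fin p)) (t : ℝ) (b : Fin p → ℝ) :
    restr S (fun j => t * b j) = fun j => t * restr S b j := by
  funext j; unfold restr; by_cases h : j ∈ S <;> simp [h]

lemma qf_smul {n p : ℕ} (X : Matrix (Fin n) (Fin p) ℝ) (t : ℝ) (b : Fin p → ℝ) :
    qf X (fun j => t * b j) = t ^ 2 * qf X b := by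
  unfold qf
  rw [Finset.mul_sum]
  refine Finset.sum_congr rfl fun i _ => ?_
  have : X.mulVec (fun j => t * b j) i = t * X.mulVec b i := by
    simp [Matrix.mulVec, dotProduct, Finset.mul_sum, mul_comm, mul_left_comm]
  rw [this]; ring

lemma l1_split {p : ℕ} (S : Finset (Fin p)) (b : Fin p → ℝ) :
    l1 b = l1 (restr S b) + l1 (restr Sᶜ b) := by
  unfold l1 restr
  rw [← Finset.sum_add_distrib]
  refine Finset.sum_congr rfl fun j _ => ?_
  by_cases h : j ∈ S <;> simp [h]

theorem stmt2 {n p : ℕ} (X : Matrix (Fin n) (Fin p) ℝ) (S : Finset (Fin p))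
    (u v : ℝ) (hu : 0 < u) (huv : u < v) :
    sInf {c : ℝ | ∃ b : Fin p → ℝ,
        l1 (restr S b) - v * l1 (restr Sᶜ b) = 1 ∧ c = (S.card : ℝ) * qf X b / n} ≥
    sInf {c : ℝ | ∃ b : Fin p → ℝ,
        l1 (restr S b) - u * l1 (restr Sᶜ b) = 1 ∧
        l1 b ≤ 1 + (1 + u) / (v - u) ∧ c = (S.card : ℝ) * qf X b / n} := by
  have hvu : 0 < v - u := by linarith
  by_cases hS : S.Nonempty
  · obtain ⟨j0, hj0⟩ := hS
    have hbdd : BddBelow {c : ℝ | ∃ b : Fin p → ℝ,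
        l1 (restr S b) - u * l1 (restr Sᶜ b) = 1 ∧
        l1 b ≤ 1 + (1 + u) / (v - u) ∧ c = (S.card : ℝ) * qf X b / n} := by
      refine ⟨0, ?_⟩
      rintro c ⟨b, _, _, rfl⟩
      have := qf_nonneg X b
      positivity
    apply le_csInf
    · refine ⟨(S.card : ℝ) * qf X (fun j => if j = j0 then 1 else 0) / n,
        (fun j => if j = j0 then 1 else 0), ?_, rfl⟩
      have h1 : l1 (restr S fun j => if j = j0 then 1 else 0) = 1 := by
        unfold l1 restr
        rw [Finset.sum_eq_single j0]
        · simp [hj0]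
        · intro j _ hj; simp [hj]
        · simp
      have h2 : l1 (restr Sᶜ fun j => if j = j0 then 1 else 0) = 0 := by
        unfold l1 restr
        refine Finset.sum_eq_zero fun j _ => ?_
        by_cases h : j ∈ Sᶜ
        · have : j ≠ j0 := fun e => (Finset.mem_compl.mp h) (e ▸ hj0)
          simp [h, this]
        · simp [h]
      rw [h1, h2]; ring
    · rintro c ⟨b, hb, rfl⟩
      set s := l1 (restr S b) with hs
      set r := l1 (restr Sᶜ b) with hr
      have hr0 : 0 ≤ r := l1_nonneg _
      have hD : 0 < s - u * r := by nlinarith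
      set t := 1 / (s - u * r) with htdef
      have ht0 : 0 < t := by positivity
      have ht1 : t ≤ 1 := by
        rw [htdef, div_le_one hD]; nlinarith
      calc sInf {c : ℝ | ∃ b : Fin p → ℝ,
            l1 (restr S b) - u * l1 (restr Sᶜ b) = 1 ∧
            l1 b ≤ 1 + (1 + u) / (v - u) ∧ c = (S.card : ℝ) * qf X b / n}
          ≤ (S.card : ℝ) * qf X (fun j => t * b j) / n := by
            apply csInf_le hbdd
            refine ⟨(fun j => t * b j), ?_, ?_, rfl⟩
            · rw [restr_smul, restr_smul, l1_smul, l1_smul, abs_of_pos ht0, ← hs, ← hr, htdef]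
              field_simp
            · rw [l1_smul, abs_of_pos ht0, l1_split S b, ← hs, ← hr, htdef]
              rw [div_mul_eq_mul_div, one_mul, div_le_iff₀ hD]
              set q := (1 + u) / (v - u) with hqdef
              have hq1 : q * (v - u) = 1 + u := div_mul_cancel₀ _ (ne_of_gt hvu)
              have hq2 : 0 ≤ q := by positivity
              nlinarith
        _ ≤ (S.card : ℝ) * qf X b / n := by
            rw [qf_smul]
            have hq : t ^ 2 * qf X b ≤ qf X b := by
              nlinarith [qf_nonneg X b, mul_le_mul ht1 ht1 (le_of_lt ht0) zero_le_one]
            rcases Nat.eq_zero_or_pos n with h | h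
            · simp [h]
            · have hn : (0:ℝ) < n := Nat.cast_pos.mpr h
              gcongr
  · have hempty : ∀ (w : ℝ), 0 < w → ∀ b : Fin p → ℝ,
        l1 (restr S b) - w * l1 (restr Sᶜ b) ≠ 1 := by
      intro w hw b
      have h1 : l1 (restr S b) = 0 := by
        unfold l1 restr
        refine Finset.sum_eq_zero fun j _ => ?_
        have : j ∉ S := fun h => hS ⟨j, h⟩
        simp [this]
      have h2 : 0 ≤ l1 (restr Sᶜ b) := l1_nonneg _
      intro h; rw [h1] at h; nlinarith
    have e1 : {c : ℝ | ∃ b : Fin p → ℝ,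
        l1 (restr S b) - v * l1 (restr Sᶜ b) = 1 ∧ c = (S.card : ℝ) * qf X b / n} = ∅ := by
      ext c; simp only [Set.mem_setOf_eq, Set.mem_empty_iff_false, iff_false]
      rintro ⟨b, hb, _⟩; exact hempty v (by linarith) b hb
    have e2 : {c : ℝ | ∃ b : Fin p → ℝ,
        l1 (restr S b) - u * l1 (restr Sᶜ b) = 1 ∧
        l1 b ≤ 1 + (1 + u) / (v - u) ∧ c = (S.card : ℝ) * qf X b / n} = ∅ := by
      ext c; simp only [Set.mem_setOf_eq, Set.mem_empty_iff_false, iff_false]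
      rintro ⟨b, hb, _⟩; exact hempty u hu b hb
    rw [e1, e2]
end

section
/- Suppose min{‖Xb‖₂ : ‖b_S‖₁ − ‖b_{−S}‖₁ = 1} > 0. Then for any minimizer b* of ‖Xb‖₂ over {b : ‖b_S‖₁ − ‖b_{−S}‖₁ = 1}, every coordinate b*_j with j ∈ S is nonzero. -/
open Finset

theorem stmt4 {n p : ℕ} (X : Matrix (Fin n) (Fin p) ℝ) (S : Finset (Fin p))
    (hpos : 0 < sInf {c : ℝ | ∃ b : Fin p → ℝ,
        l1 (restr S b) - l1 (restr Sᶜ b) = 1 ∧ c = Real.sqrt (qf X b)})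
    (bstar : Fin p → ℝ)
    (hcon : l1 (restr S bstar) - l1 (restr Sᶜ bstar) = 1)
    (hmin : ∀ b : Fin p → ℝ, l1 (restr S b) - l1 (restr Sᶜ b) = 1 →
      Real.sqrt (qf X bstar) ≤ Real.sqrt (qf X b)) :
    ∀ j ∈ S, bstar j ≠ 0 := by
  intro j hj hj0
  have hqf_nonneg : ∀ b : Fin p → ℝ, 0 ≤ qf X b :=
    fun b => Finset.sum_nonneg fun i _ => sq_nonneg _
  -- qf X bstar > 0
  have hbdd : BddBelow {c : ℝ | ∃ b : Fin p → ℝ,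
      l1 (restr S b) - l1 (restr Sᶜ b) = 1 ∧ c = Real.sqrt (qf X b)} := by
    refine ⟨0, ?_⟩
    rintro c ⟨b, -, rfl⟩
    exact Real.sqrt_nonneg _
  have hA0 : 0 < Real.sqrt (qf X bstar) :=
    lt_of_lt_of_le hpos (csInf_le hbdd ⟨bstar, hcon, rfl⟩)
  have hA : 0 < qf X bstar := Real.sqrt_pos.mp hA0
  set A : ℝ := qf X bstar with hAdef
  set B : ℝ := ∑ i, X.mulVec bstar i * X i j with hBdef
  set C : ℝ := ∑ i, (X i j) ^ 2 with hCdef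
  have hC : 0 ≤ C := Finset.sum_nonneg fun i _ => sq_nonneg _
  set ε : ℝ := A / (2 * (C + 1)) with hεdef
  have hε : 0 < ε := div_pos hA (by linarith)
  have hεeq : ε * (2 * (C + 1)) = A := by
    rw [hεdef]; exact div_mul_cancel₀ A (by linarith : (0:ℝ) < 2 * (C + 1)).ne'
  set t : ℝ := if 0 ≤ B then -ε else ε with htdef
  have htB : t * B ≤ 0 := by
    rw [htdef]; split_ifs with h
    · nlinarith
    · nlinarith [lt_of_not_ge h]
  have htabs : |t| = ε := by
    rw [htdef]; split_ifs with h
    · rw [abs_neg, abs_of_pos hε]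
    · rw [abs_of_pos hε]
  have ht2 : t ^ 2 = ε ^ 2 := by
    rw [htdef]; split_ifs <;> ring
  have h1ε : (0:ℝ) < 1 + ε := by linarith
  set c : ℝ := (1 + ε)⁻¹ with hcdef
  have hc : 0 < c := inv_pos.mpr h1ε
  have hc1 : c * (1 + ε) = 1 := inv_mul_cancel₀ (ne_of_gt h1ε)
  set e : Fin p → ℝ := Pi.single j 1 with hedef
  set b' : Fin p → ℝ := c • (bstar + t • e) with hb'def
  -- l1 computations
  have hpt1 : ∀ k, |restr S b' k| = c * |restr S bstar k| + (if k = j then c * ε else 0) := by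
    intro k
    by_cases hk : k ∈ S
    · by_cases hkj : k = j
      · subst hkj
        have hb'k : b' k = c * t := by
          simp [hb'def, hedef, hj0]
        rw [if_pos rfl]
        simp only [restr, if_pos hk, hb'k, hj0, abs_mul, abs_of_pos hc, htabs, abs_zero]
        ring
      · have hek : e k = 0 := Pi.single_eq_of_ne hkj 1
        have hb'k : b' k = c * bstar k := by
          simp [hb'def, hek]
        rw [if_neg hkj]
        simp only [restr, if_pos hk, hb'k, abs_mul, abs_of_pos hc]
        ring
    · have hkj : k ≠ j := fun h => hk (h ▸ hj)
      rw [if_neg hkj]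
      simp [restr, hk]
  have h1 : l1 (restr S b') = c * (l1 (restr S bstar) + ε) := by
    simp only [l1]
    rw [Finset.sum_congr rfl fun k _ => hpt1 k, Finset.sum_add_distrib,
      Finset.sum_ite_eq' Finset.univ j (fun _ => c * ε), ← Finset.mul_sum]
    simp only [Finset.mem_univ, if_true]
    ring
  have hpt2 : ∀ k, |restr Sᶜ b' k| = c * |restr Sᶜ bstar k| := by
    intro k
    by_cases hk : k ∈ Sᶜ
    · have hkj : k ≠ j := by
        intro h; subst h; exact (Finset.mem_compl.mp hk) hj
      have hek : e k = 0 := Pi.single_eq_of_ne hkj 1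
      have hb'k : b' k = c * bstar k := by
        simp [hb'def, hek]
      simp only [restr, if_pos hk, hb'k, abs_mul, abs_of_pos hc]
    · simp [restr, hk]
  have h2 : l1 (restr Sᶜ b') = c * l1 (restr Sᶜ bstar) := by
    simp only [l1]
    rw [Finset.sum_congr rfl fun k _ => hpt2 k, ← Finset.mul_sum]
  -- b' satisfies the constraint
  have hcon' : l1 (restr S b') - l1 (restr Sᶜ b') = 1 := by
    rw [h1, h2,
      show c * (l1 (restr S bstar) + ε) - c * l1 (restr Sᶜ bstar)
        = c * ((l1 (restr S bstar) - l1 (restr Sᶜ bstar)) + ε) by ring,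
      hcon, hc1]
  -- qf of b'
  have hmv : ∀ i, X.mulVec b' i = c * (X.mulVec bstar i + t * X i j) := by
    intro i
    rw [hb'def, Matrix.mulVec_smul, Matrix.mulVec_add, Matrix.mulVec_smul, hedef,
      Matrix.mulVec_single]
    simp [mul_comm]
  have hq : qf X b' = c ^ 2 * (A + 2 * t * B + t ^ 2 * C) := by
    have hAsum : (∑ i, (X.mulVec bstar i) ^ 2) = A := rfl
    simp only [qf]
    calc (∑ i, (X.mulVec b' i) ^ 2)
        = ∑ i, (c ^ 2 * (X.mulVec bstar i) ^ 2
            + (2 * c ^ 2 * t) * (X.mulVec bstar i * X i j)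
            + (c ^ 2 * t ^ 2) * (X i j) ^ 2) :=
          Finset.sum_congr rfl fun i _ => by rw [hmv i]; ring
      _ = c ^ 2 * (∑ i, (X.mulVec bstar i) ^ 2) + (2 * c ^ 2 * t) * B
            + (c ^ 2 * t ^ 2) * C := by
          rw [Finset.sum_add_distrib, Finset.sum_add_distrib, ← Finset.mul_sum,
            ← Finset.mul_sum, ← Finset.mul_sum, ← hBdef, ← hCdef]
      _ = c ^ 2 * (A + 2 * t * B + t ^ 2 * C) := by rw [hAsum]; ring
  -- key inequality
  have hx : ε * (ε * (2 * (C + 1))) = ε * A := by rw [hεeq]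
  have key : A + 2 * t * B + t ^ 2 * C < A * (1 + ε) ^ 2 := by
    nlinarith [htB, ht2, hx, mul_pos hε hA, sq_nonneg ε, mul_pos hε hε]
  have hqlt : qf X b' < A := by
    have hc2 : (0:ℝ) < c ^ 2 := by positivity
    have h3 := mul_lt_mul_of_pos_left key hc2
    have hc4 : c ^ 2 * (A * (1 + ε) ^ 2) = A := by
      rw [hcdef]
      field_simp
    calc qf X b' = c ^ 2 * (A + 2 * t * B + t ^ 2 * C) := hq
      _ < c ^ 2 * (A * (1 + ε) ^ 2) := h3
      _ = A := hc4
  have hle := hmin b' hcon'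
  have hlt : Real.sqrt (qf X b') < Real.sqrt A :=
    Real.sqrt_lt_sqrt (hqf_nonneg b') hqlt
  linarith
end

section
/- Let X_S^T X_S be nonsingular and let b*_S minimize ‖X_S b_S‖₂ subject to ‖b_S‖₁ = 1. Then every entry of b*_S is nonzero. -/
open Finset

theorem stmt5 {n s : ℕ} (XS : Matrix (Fin n) (Fin s) ℝ)
    (hns : IsUnit (XS.transpose * XS).det)
    (bstar : Fin s → ℝ)
    (hcon : ∑ j, |bstar j| = 1)
    (hmin : ∀ b : Fin s → ℝ, (∑ j, |b j|) = 1 →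
      Real.sqrt (qf XS bstar) ≤ Real.sqrt (qf XS b)) :
    ∀ j, bstar j ≠ 0 := by
  intro j0 hj0
  set u : Fin n → ℝ := XS.mulVec bstar with hu
  have hq : qf XS bstar = ∑ i, u i ^ 2 := rfl
  set Q : ℝ := qf XS bstar with hQdef
  have hQnn : (0:ℝ) ≤ Q := by rw [hq]; exact Finset.sum_nonneg fun i _ => sq_nonneg _
  have hQpos : 0 < Q := by
    rcases hQnn.lt_or_eq with h | h
    · exact h
    · exfalso
      have hz : ∀ i, u i = 0 := by
        intro i
        have h0 : ∑ i, u i ^ 2 = 0 := by rw [← hq, ← h]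
        have := (Finset.sum_eq_zero_iff_of_nonneg (fun i _ => sq_nonneg (u i))).mp h0 i
          (Finset.mem_univ i)
        exact pow_eq_zero_iff (two_ne_zero) |>.mp this
      have hinj : Function.Injective ((XS.transpose * XS).mulVec) :=
        Matrix.mulVec_injective_iff_isUnit.mpr ((Matrix.isUnit_iff_isUnit_det _).mpr hns)
      have hb0 : bstar = 0 := by
        apply hinj
        have : XS.mulVec bstar = 0 := funext hz
        simp [← Matrix.mulVec_mulVec, this]
      rw [hb0] at hcon
      simp at hcon
  set a : ℝ := ∑ i, u i * XS i j0 with ha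
  set N : ℝ := ∑ i, (XS i j0) ^ 2 with hN
  have hNnn : (0:ℝ) ≤ N := Finset.sum_nonneg fun i _ => sq_nonneg _
  set σ : ℝ := if 0 ≤ a then -1 else 1 with hσ
  have hσa : σ * a = -|a| := by
    rcases le_or_gt 0 a with h | h
    · rw [hσ, if_pos h, abs_of_nonneg h]; ring
    · rw [hσ, if_neg (not_le.mpr h), abs_of_neg h]; ring
  have hσsq : σ ^ 2 = 1 := by
    rcases le_or_gt 0 a with h | h
    · rw [hσ, if_pos h]; norm_num
    · rw [hσ, if_neg (not_le.mpr h)]; norm_num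
  have hσabs : |σ| = 1 := by
    rcases le_or_gt 0 a with h | h
    · rw [hσ, if_pos h]; norm_num
    · rw [hσ, if_neg (not_le.mpr h)]; norm_num
  set t : ℝ := Q / (N + Q + 1) with ht
  have hden : (0:ℝ) < N + Q + 1 := by linarith
  have htpos : 0 < t := div_pos hQpos hden
  have htd : t * (N + Q + 1) = Q := div_mul_cancel₀ _ (ne_of_gt hden)
  have h1t : (0:ℝ) < 1 + t := by linarith
  set b : Fin s → ℝ := fun k => (bstar k + (if k = j0 then t * σ else 0)) / (1 + t) with hb
  -- l1 norm of b is 1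
  have habs : ∀ j, |bstar j + (if j = j0 then t * σ else 0)| =
      |bstar j| + (if j = j0 then t else 0) := by
    intro j
    by_cases hjj : j = j0
    · subst hjj
      rw [hj0]
      simp [abs_mul, hσabs, abs_of_pos htpos]
    · simp [hjj]
  have hl1 : ∑ j, |b j| = 1 := by
    have : ∀ j, |b j| = (|bstar j| + (if j = j0 then t else 0)) / (1 + t) := by
      intro j
      rw [hb]
      rw [abs_div, abs_of_pos h1t, habs j]
    rw [Finset.sum_congr rfl fun j _ => this j, ← Finset.sum_div, Finset.sum_add_distrib,
      hcon, Finset.sum_ite_eq' Finset.univ j0 (fun _ => t)]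
    simp [ne_of_gt h1t]
  -- qf of b
  have hmv : ∀ i, XS.mulVec b i = (u i + t * σ * XS i j0) / (1 + t) := by
    intro i
    rw [hu]
    simp only [Matrix.mulVec, dotProduct, hb]
    have step : ∀ k, XS i k * ((bstar k + if k = j0 then t * σ else 0) / (1 + t))
        = (XS i k * bstar k + (if k = j0 then t * σ * XS i j0 else 0)) / (1 + t) := by
      intro k
      rw [← mul_div_assoc]
      congr 1
      by_cases hk : k = j0
      · subst hk; rw [if_pos rfl, if_pos rfl]; ring
      · simp [hk]
    rw [Finset.sum_congr rfl fun k _ => step k, ← Finset.sum_div, Finset.sum_add_distrib,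
      Finset.sum_ite_eq' Finset.univ j0 (fun _ => t * σ * XS i j0)]
    simp
  have hqfb : qf XS b = (Q - 2 * |a| * t + N * t ^ 2) / (1 + t) ^ 2 := by
    show (∑ i, (XS.mulVec b i) ^ 2) = _
    rw [Finset.sum_congr rfl fun i _ => by rw [hmv i]]
    have : ∀ i, ((u i + t * σ * XS i j0) / (1 + t)) ^ 2 =
        (u i ^ 2 + 2 * t * σ * (u i * XS i j0) + t ^ 2 * σ ^ 2 * (XS i j0) ^ 2) / (1 + t) ^ 2 := by
      intro i; rw [div_pow]; ring_nf
    rw [Finset.sum_congr rfl fun i _ => this i, ← Finset.sum_div]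
    congr 1
    rw [Finset.sum_add_distrib, Finset.sum_add_distrib, ← Finset.mul_sum, ← Finset.mul_sum,
      ← ha, ← hN, ← hq]
    linear_combination 2 * t * hσa + N * t ^ 2 * hσsq
  have hlt : qf XS b < Q := by
    rw [hqfb, div_lt_iff₀ (by positivity)]
    have habsnn : 0 ≤ |a| := abs_nonneg a
    nlinarith [mul_pos htpos hQpos, sq_nonneg t, mul_nonneg htpos.le habsnn,
      mul_pos htpos htpos]
  have hqfbnn : 0 ≤ qf XS b := Finset.sum_nonneg fun i _ => sq_nonneg _
  have := hmin b hl1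
  have hlt2 : Real.sqrt (qf XS b) < Real.sqrt Q := Real.sqrt_lt_sqrt hqfbnn hlt
  linarith
end

section
/- Suppose κ²(S₀) := min{ s₀·‖Σ₀^{1/2} b‖₂² : ‖b_{S₀}‖₁ − ‖b_{−S₀}‖₁ = 1 } > 0, where Σ₀ is positive semidefinite. If β* solves the KKT conditions nΣ₀(β* − β⁰) + λζ* = 0 with ζ* ∈ ∂‖β*‖₁ (equivalently β* minimizes n‖Σ₀^{1/2}(b−β⁰)‖₂² + 2λ‖b‖₁), and S₀ is the support of β⁰ with |S₀| = s₀, then n‖Σ₀^{1/2}(β* − β⁰)‖₂² ≤ s₀ λ² / (n κ²(S₀)). -/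
open Finset

theorem stmt8 {p : ℕ} (n : ℕ) (Sig : Matrix (Fin p) (Fin p) ℝ) (hSig : Sig.PosSemidef)
    (lam : ℝ) (hlam : 0 < lam)
    (beta0 : Fin p → ℝ) (S0 : Finset (Fin p))
    (hS0 : ∀ j, j ∈ S0 ↔ beta0 j ≠ 0)
    (hk : 0 < sInf {c : ℝ | ∃ b : Fin p → ℝ,
        l1 (restr S0 b) - l1 (restr S0ᶜ b) = 1 ∧
        c = (S0.card : ℝ) * (∑ j, b j * (Sig.mulVec b) j)})
    (betastar zeta : Fin p → ℝ)
    (hKKT : ∀ j, (n : ℝ) * (Sig.mulVec (betastar - beta0)) j + lam * zeta j = 0)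
    (hzeta1 : ∀ j, |zeta j| ≤ 1)
    (hzeta2 : (∑ j, zeta j * betastar j) = l1 betastar) :
    (n : ℝ) * (∑ j, (betastar j - beta0 j) * (Sig.mulVec (betastar - beta0)) j) ≤
      (S0.card : ℝ) * lam ^ 2 /
        ((n : ℝ) * sInf {c : ℝ | ∃ b : Fin p → ℝ,
          l1 (restr S0 b) - l1 (restr S0ᶜ b) = 1 ∧
          c = (S0.card : ℝ) * (∑ j, b j * (Sig.mulVec b) j)}) := by
  have hpsd : ∀ b : Fin p → ℝ, 0 ≤ ∑ j, b j * (Sig.mulVec b) j := by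
    intro b
    have := hSig.dotProduct_mulVec_nonneg b
    simpa [dotProduct] using this
  set K := sInf {c : ℝ | ∃ b : Fin p → ℝ,
          l1 (restr S0 b) - l1 (restr S0ᶜ b) = 1 ∧
          c = (S0.card : ℝ) * (∑ j, b j * (Sig.mulVec b) j)} with hKdef
  set Q := ∑ j, (betastar j - beta0 j) * (Sig.mulVec (betastar - beta0)) j with hQdef
  have hQ0 : 0 ≤ Q := by
    rw [hQdef]
    have := hpsd (betastar - beta0)
    simpa [Pi.sub_apply] using this
  have hbeta0 : ∀ j, j ∉ S0 → beta0 j = 0 := by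
    intro j hj
    by_contra h
    exact hj ((hS0 j).2 h)
  set A := ∑ j ∈ S0, |betastar j - beta0 j| with hAdef
  set B := ∑ j ∈ S0ᶜ, |betastar j - beta0 j| with hBdef
  -- Step 1: n*Q = lam * (∑ ζ β⁰ - l1 β*)
  have hm : ∀ j, (n:ℝ) * (Sig.mulVec (betastar - beta0)) j = -(lam * zeta j) := by
    intro j; linarith [hKKT j]
  have h2 : (n:ℝ) * Q = -lam * ∑ j, zeta j * (betastar j - beta0 j) := by
    rw [hQdef, Finset.mul_sum]
    rw [show (-lam * ∑ j, zeta j * (betastar j - beta0 j)) =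
        ∑ j, (betastar j - beta0 j) * (-(lam * zeta j)) by rw [Finset.mul_sum]; apply Finset.sum_congr rfl; intro j _; ring]
    apply Finset.sum_congr rfl
    intro j _
    rw [← hm j]; ring
  have hsplit : ∑ j, zeta j * (betastar j - beta0 j) = l1 betastar - ∑ j, zeta j * beta0 j := by
    rw [← hzeta2, ← Finset.sum_sub_distrib]
    apply Finset.sum_congr rfl
    intro j _; ring
  -- Step 2: ∑ ζ β⁰ - l1 β* ≤ A - B
  have e1 : ∑ j, zeta j * beta0 j = ∑ j ∈ S0, zeta j * beta0 j := by
    symm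
    apply Finset.sum_subset (Finset.subset_univ S0)
    intro j _ hj
    rw [hbeta0 j hj, mul_zero]
  have e2 : l1 betastar = ∑ j ∈ S0, |betastar j| + ∑ j ∈ S0ᶜ, |betastar j| := by
    rw [l1, Finset.sum_add_sum_compl]
  have e3 : ∑ j ∈ S0, (zeta j * beta0 j - |betastar j|) ≤ A := by
    rw [hAdef]
    apply Finset.sum_le_sum
    intro j _
    have h1 : zeta j * beta0 j ≤ |beta0 j| := by
      calc zeta j * beta0 j ≤ |zeta j * beta0 j| := le_abs_self _
        _ = |zeta j| * |beta0 j| := abs_mul _ _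
        _ ≤ 1 * |beta0 j| := mul_le_mul_of_nonneg_right (hzeta1 j) (abs_nonneg _)
        _ = |beta0 j| := one_mul _
    have h2 : |beta0 j| - |betastar j| ≤ |betastar j - beta0 j| := by
      rw [abs_sub_comm]
      exact abs_sub_abs_le_abs_sub _ _
    linarith
  have e4 : ∑ j ∈ S0ᶜ, |betastar j| = B := by
    rw [hBdef]
    apply Finset.sum_congr rfl
    intro j hj
    rw [hbeta0 j (Finset.mem_compl.mp hj), sub_zero]
  have hbound : ∑ j, zeta j * beta0 j - l1 betastar ≤ A - B := by
    rw [Finset.sum_sub_distrib] at e3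
    linarith [e1, e2, e4]
  set t := A - B with htdef
  have hnQ : (n:ℝ) * Q ≤ lam * t := by
    rw [h2, hsplit]
    have := mul_le_mul_of_nonneg_left hbound hlam.le
    linarith
  -- bounded below
  have hbdd : BddBelow {c : ℝ | ∃ b : Fin p → ℝ,
          l1 (restr S0 b) - l1 (restr S0ᶜ b) = 1 ∧
          c = (S0.card : ℝ) * (∑ j, b j * (Sig.mulVec b) j)} := by
    refine ⟨0, ?_⟩
    rintro c ⟨b, _, rfl⟩
    exact mul_nonneg (Nat.cast_nonneg _) (hpsd b)
  rcases Nat.eq_zero_or_pos n with hn | hn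
  · simp [hn]
  have hnpos : (0:ℝ) < n := by exact_mod_cast hn
  have hRHS : 0 ≤ (S0.card : ℝ) * lam ^ 2 / ((n:ℝ) * K) := by positivity
  rcases le_or_gt t 0 with ht | ht
  · have : lam * t ≤ 0 := mul_nonpos_of_nonneg_of_nonpos hlam.le ht
    linarith
  -- t > 0 : use b = t⁻¹ • Δ
  have hl1 : ∀ (S : Finset (Fin p)),
      l1 (restr S (t⁻¹ • (betastar - beta0))) = t⁻¹ * ∑ j ∈ S, |betastar j - beta0 j| := by
    intro S
    unfold l1 restr
    calc (∑ j, |if j ∈ S then (t⁻¹ • (betastar - beta0)) j else 0|)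
        = ∑ j, (if j ∈ S then t⁻¹ * |betastar j - beta0 j| else 0) := by
          apply Finset.sum_congr rfl
          intro j _
          by_cases h : j ∈ S <;>
            simp [h, Pi.smul_apply, Pi.sub_apply, smul_eq_mul, abs_mul,
              abs_of_pos (inv_pos.mpr ht)]
      _ = ∑ j ∈ S, t⁻¹ * |betastar j - beta0 j| := by
          rw [Finset.sum_ite_mem, Finset.univ_inter]
      _ = t⁻¹ * ∑ j ∈ S, |betastar j - beta0 j| := by rw [Finset.mul_sum]
  have hnorm : l1 (restr S0 (t⁻¹ • (betastar - beta0))) -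
      l1 (restr S0ᶜ (t⁻¹ • (betastar - beta0))) = 1 := by
    rw [hl1 S0, hl1 S0ᶜ, ← hAdef, ← hBdef, ← mul_sub, ← htdef]
    field_simp
  have hq : (∑ j, (t⁻¹ • (betastar - beta0)) j * (Sig.mulVec (t⁻¹ • (betastar - beta0))) j)
      = t⁻¹ * t⁻¹ * Q := by
    rw [Matrix.mulVec_smul, hQdef, Finset.mul_sum]
    apply Finset.sum_congr rfl
    intro j _
    simp [Pi.smul_apply, Pi.sub_apply, smul_eq_mul]
    ring
  have hKle : K ≤ (S0.card : ℝ) * (t⁻¹ * t⁻¹ * Q) := by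
    have hmem : ((S0.card : ℝ) * (∑ j, (t⁻¹ • (betastar - beta0)) j *
        (Sig.mulVec (t⁻¹ • (betastar - beta0))) j)) ∈ {c : ℝ | ∃ b : Fin p → ℝ,
          l1 (restr S0 b) - l1 (restr S0ᶜ b) = 1 ∧
          c = (S0.card : ℝ) * (∑ j, b j * (Sig.mulVec b) j)} :=
      ⟨t⁻¹ • (betastar - beta0), hnorm, rfl⟩
    have := csInf_le hbdd hmem
    rw [hq] at this
    exact this
  have htinv : t⁻¹ * t = 1 := inv_mul_cancel₀ (ne_of_gt ht)
  have hKt : K * (t * t) ≤ (S0.card : ℝ) * Q := by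
    have h := mul_le_mul_of_nonneg_right hKle (mul_nonneg ht.le ht.le)
    calc K * (t * t) ≤ (S0.card : ℝ) * (t⁻¹ * t⁻¹ * Q) * (t * t) := h
      _ = (S0.card : ℝ) * Q * ((t⁻¹ * t) * (t⁻¹ * t)) := by ring
      _ = (S0.card : ℝ) * Q := by rw [htinv]; ring
  clear_value t A B Q K
  clear hbdd hpsd hm h2 hsplit e1 e2 e3 e4 hbound hl1 hnorm hq hKle hKdef hQdef hAdef hBdef htdef hKKT hzeta1 hzeta2 hS0 hbeta0 hSig
  rw [le_div_iff₀ (by positivity : (0:ℝ) < (n:ℝ) * K)]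
  rcases eq_or_lt_of_le hQ0 with hQ | hQ
  · rw [← hQ]
    have : (0:ℝ) ≤ (S0.card : ℝ) * lam ^ 2 := by positivity
    linarith
  · have h3 : ((n:ℝ) * Q) * ((n:ℝ) * Q) ≤ (lam * t) * (lam * t) :=
      mul_le_mul hnQ hnQ (by positivity) (by positivity)
    have h4 : K * (((n:ℝ) * Q) * ((n:ℝ) * Q)) ≤ K * ((lam * t) * (lam * t)) :=
      mul_le_mul_of_nonneg_left h3 hk.le
    have h5 : lam ^ 2 * (K * (t * t)) ≤ lam ^ 2 * ((S0.card : ℝ) * Q) :=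
      mul_le_mul_of_nonneg_left hKt (sq_nonneg lam)
    nlinarith [hQ, hk, hnpos, h4, h5]
end

section
/- Let β* solve nΣ₀(β* − β⁰) + λζ* = 0 with ζ* ∈ ∂‖β*‖₁, and let 0 ≤ ν < 1. Then the set S*(ν) := {j : |ζ*_j| ≥ 1 − ν} satisfies |S*(ν)| ≤ (Λ²_max / (1−ν)²) · (n²/λ²) · ‖Σ₀^{1/2}(β* − β⁰)‖₂², where Λ²_max is the largest eigenvalue of Σ₀. -/
open Finset Matrix

theorem stmt9 {p : ℕ} (n : ℕ) (Sig : Matrix (Fin p) (Fin p) ℝ) (hSig : Sig.PosSemidef)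
    (lamMaxSq : ℝ)
    (hmax : ∀ b : Fin p → ℝ, (∑ j, b j * (Sig.mulVec b) j) ≤ lamMaxSq * ∑ j, (b j) ^ 2)
    (lam : ℝ) (hlam : 0 < lam)
    (beta0 betastar zeta : Fin p → ℝ)
    (hKKT : ∀ j, (n : ℝ) * (Sig.mulVec (betastar - beta0)) j + lam * zeta j = 0)
    (hzeta1 : ∀ j, |zeta j| ≤ 1)
    (hzeta2 : (∑ j, zeta j * betastar j) = l1 betastar)
    (nu : ℝ) (hnu0 : 0 ≤ nu) (hnu1 : nu < 1) :
    ((Finset.univ.filter (fun j => 1 - nu ≤ |zeta j|)).card : ℝ) ≤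
      (lamMaxSq / (1 - nu) ^ 2) * ((n : ℝ) ^ 2 / lam ^ 2) *
        (∑ j, (betastar j - beta0 j) * (Sig.mulVec (betastar - beta0)) j) := by
  set d : Fin p → ℝ := betastar - beta0 with hd
  set M : Matrix (Fin p) (Fin p) ℝ := (open scoped MatrixOrder in CFC.sqrt Sig) with hM
  set b : Fin p → ℝ := M.mulVec d with hb
  set S : Finset (Fin p) := Finset.univ.filter (fun j => 1 - nu ≤ |zeta j|) with hS
  set Q : ℝ := ∑ j, (betastar j - beta0 j) * (Sig.mulVec d) j with hQ
  have hMsym : Mᵀ = M := by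
    have h := (open scoped MatrixOrder in (CFC.sqrt_nonneg Sig).posSemidef).isHermitian
    ext i j
    have := congrFun (congrFun h.eq i) j
    simpa [Matrix.conjTranspose_apply, Matrix.transpose_apply] using this
  have hMM : M * M = Sig := (open scoped MatrixOrder in CFC.sqrt_mul_sqrt_self Sig hSig.nonneg)
  have hSd : Sig.mulVec d = M.mulVec b := by
    rw [hb, Matrix.mulVec_mulVec, hMM]
  -- symmetric move
  have hmove : ∀ x y : Fin p → ℝ, dotProduct (M.mulVec x) y
      = dotProduct x (M.mulVec y) := by
    intro x y
    rw [dotProduct_mulVec, ← Matrix.vecMul_transpose, hMsym]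
  -- Q equals b ⬝ b
  have hQb : Q = ∑ j, (b j) ^ 2 := by
    have : Q = dotProduct d (Sig.mulVec d) := by
      rw [hQ]; simp [dotProduct, hd]
    rw [this, hSd, ← hmove d b, ← hb]
    simp [dotProduct, sq]
  have hQnn : 0 ≤ Q := by
    rw [hQb]; positivity
  -- h3 : ∑ (Σd)_j^2 ≤ lamMaxSq * Q
  have h3 : (∑ j, (Sig.mulVec d j) ^ 2) ≤ lamMaxSq * Q := by
    have e : (∑ j, (Sig.mulVec d j) ^ 2) = ∑ j, b j * (Sig.mulVec b) j := by
      have : (∑ j, (Sig.mulVec d j) ^ 2) = dotProduct (Sig.mulVec d) (Sig.mulVec d) := by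
        simp [dotProduct, sq]
      rw [this, hSd, hmove b (M.mulVec b), Matrix.mulVec_mulVec, hMM]
      simp [dotProduct]
    rw [e, hQb]
    exact hmax b
  -- h2 : lam^2 * ∑ ζ² = n² * ∑ (Σd)²
  have h2 : lam ^ 2 * (∑ j, (zeta j) ^ 2) = (n : ℝ) ^ 2 * ∑ j, (Sig.mulVec d j) ^ 2 := by
    rw [Finset.mul_sum, Finset.mul_sum]
    apply Finset.sum_congr rfl
    intro j _
    have h := hKKT j
    have e : lam * zeta j = -((n : ℝ) * Sig.mulVec d j) := by rw [hd]; linarith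
    have : (lam * zeta j) ^ 2 = ((n : ℝ) * Sig.mulVec d j) ^ 2 := by rw [e]; ring
    nlinarith [this]
  -- h1 : (1-ν)² card ≤ ∑ ζ²
  have h1 : (1 - nu) ^ 2 * (S.card : ℝ) ≤ ∑ j, (zeta j) ^ 2 := by
    calc (1 - nu) ^ 2 * (S.card : ℝ) = ∑ _j ∈ S, (1 - nu) ^ 2 := by
          rw [Finset.sum_const, nsmul_eq_mul]; ring
      _ ≤ ∑ j ∈ S, (zeta j) ^ 2 := by
          apply Finset.sum_le_sum
          intro j hj
          have hj' : 1 - nu ≤ |zeta j| := (Finset.mem_filter.mp hj).2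
          have h0 : 0 ≤ 1 - nu := by linarith
          calc (1 - nu) ^ 2 ≤ |zeta j| ^ 2 := by nlinarith [abs_nonneg (zeta j)]
            _ = (zeta j) ^ 2 := sq_abs _
      _ ≤ ∑ j, (zeta j) ^ 2 := Finset.sum_le_sum_of_subset_of_nonneg
          (Finset.filter_subset _ _) (fun j _ _ => sq_nonneg _)
  -- combine
  have hpos : (0 : ℝ) < (1 - nu) ^ 2 * lam ^ 2 := by
    have : (0:ℝ) < 1 - nu := by linarith
    positivity
  have key : (S.card : ℝ) * ((1 - nu) ^ 2 * lam ^ 2) ≤ lamMaxSq * (n : ℝ) ^ 2 * Q := by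
    have t1 : lam ^ 2 * ((1 - nu) ^ 2 * (S.card : ℝ)) ≤ lam ^ 2 * ∑ j, (zeta j) ^ 2 :=
      mul_le_mul_of_nonneg_left h1 (by positivity)
    have t3 : (n : ℝ) ^ 2 * (∑ j, (Sig.mulVec d j) ^ 2) ≤ (n : ℝ) ^ 2 * (lamMaxSq * Q) :=
      mul_le_mul_of_nonneg_left h3 (by positivity)
    nlinarith [t1, t3, h2]
  have goal_eq : (lamMaxSq / (1 - nu) ^ 2) * ((n : ℝ) ^ 2 / lam ^ 2) * Q
      = (lamMaxSq * (n : ℝ) ^ 2 * Q) / ((1 - nu) ^ 2 * lam ^ 2) := by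
    field_simp
  calc ((Finset.univ.filter (fun j => 1 - nu ≤ |zeta j|)).card : ℝ) = (S.card : ℝ) := by rw [hS]
    _ ≤ (lamMaxSq * (n : ℝ) ^ 2 * Q) / ((1 - nu) ^ 2 * lam ^ 2) := by
        rw [le_div_iff₀ hpos]; exact key
    _ = (lamMaxSq / (1 - nu) ^ 2) * ((n : ℝ) ^ 2 / lam ^ 2) * Q := goal_eq.symm
end

section
/- Let X ∈ ℝ^{n×n} be the lower-triangular matrix of ones X_{j,i} = 1{j ≥ i}, let s ≥ 1, and let S = {d₁+1, d₁+d₂+1, …, d₁+⋯+d_s+1} with d_j ≥ 2 even for j = 2,…,s and d_{s+1} := n − Σ_{j=1}^s d_j ≥ 2. Define κ̂²(S) := min{ (s+1)·‖Xb‖₂²/n : ‖b_S‖₁ − ‖b_{−(S∪{1})}‖₁ = 1 }. Then κ̂²(S) = (s+1) / ( n/d₁ + Σ_{j=2}^s 4n/d_j + n/d_{s+1} ). -/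
open Finset

/-- Position of the `j`-th jump (1-based): `pos d j = d₁ + ⋯ + d_j`. -/
def pos (d : ℕ → ℕ) (j : ℕ) : ℕ := ∑ i ∈ Finset.Icc 1 j, d i

/-- The cumulative sum `f i = b 1 + ⋯ + b i` (i.e. `f = X b` for the
lower-triangular matrix of ones `X_{j,i} = 1{j ≥ i}`). -/
noncomputable def csum (b : ℕ → ℝ) (i : ℕ) : ℝ := ∑ k ∈ Finset.Icc 1 i, b k

/-- The jump set `S = {d₁+1, d₁+d₂+1, …, d₁+⋯+d_s+1}`. -/
def jumpSet (d : ℕ → ℕ) (s : ℕ) : Finset ℕ :=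
  (Finset.Icc 1 s).image (fun j => pos d j + 1)

lemma pos_zero (d : ℕ → ℕ) : pos d 0 = 0 := by simp [pos]

lemma pos_succ (d : ℕ → ℕ) (j : ℕ) : pos d (j + 1) = pos d j + d (j + 1) :=
  Finset.sum_Icc_succ_top (by omega) d

lemma pos_eq (d : ℕ → ℕ) (j : ℕ) (hj : 1 ≤ j) : pos d j = pos d (j - 1) + d j := by
  obtain ⟨k, rfl⟩ : ∃ k, j = k + 1 := ⟨j - 1, by omega⟩
  simp [pos_succ]

lemma pos_mono (d : ℕ → ℕ) : Monotone (pos d) := fun j k h =>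
  Finset.sum_le_sum_of_subset (Finset.Icc_subset_Icc_right h)

lemma sum_Ioc_blocks (d : ℕ → ℕ) (F : ℕ → ℝ) (m : ℕ) :
    ∑ j ∈ Icc 1 m, ∑ i ∈ Ioc (pos d (j - 1)) (pos d j), F i
      = ∑ i ∈ Ioc 0 (pos d m), F i := by
  induction m with
  | zero => simp [pos_zero]
  | succ m ih =>
      rw [Finset.sum_Icc_succ_top (by omega)]
      simp only [Nat.add_sub_cancel]
      rw [ih, Finset.sum_Ioc_consecutive _ (Nat.zero_le _) (pos_mono d (Nat.le_succ m))]

lemma exists_block (d : ℕ → ℕ) (m i : ℕ) (h1 : 1 ≤ i) (h2 : i ≤ pos d m) :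
    ∃ j, 1 ≤ j ∧ j ≤ m ∧ pos d (j - 1) < i ∧ i ≤ pos d j := by
  induction m with
  | zero => rw [pos_zero] at h2; omega
  | succ m ih =>
      by_cases h : i ≤ pos d m
      · obtain ⟨j, hj⟩ := ih h
        exact ⟨j, hj.1, hj.2.1.trans (Nat.le_succ m), hj.2.2⟩
      · exact ⟨m + 1, by omega, le_rfl, by simpa using Nat.lt_of_not_le h, h2⟩

lemma indicator_eval (d : ℕ → ℕ) (g : ℕ → ℝ) (m j i : ℕ) (hj1 : 1 ≤ j) (hjm : j ≤ m)
    (h1 : pos d (j - 1) < i) (h2 : i ≤ pos d j) :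
    (∑ j' ∈ Icc 1 m, if pos d (j' - 1) < i ∧ i ≤ pos d j' then g j' else 0) = g j := by
  rw [Finset.sum_eq_single_of_mem j (by simp [hj1, hjm])]
  · simp [h1, h2]
  · intro j' hj' hne
    simp only [Finset.mem_Icc] at hj'
    rw [if_neg]
    rintro ⟨c1, c2⟩
    rcases Nat.lt_or_ge j' j with h | h
    · exact absurd (c2.trans_lt ((pos_mono d (by omega : j' ≤ j - 1)).trans_lt h1))
        (lt_irrefl i)
    · have : j ≤ j' - 1 := by omega
      exact absurd ((h2.trans (pos_mono d this)).trans_lt c1) (lt_irrefl _)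

lemma csum_Ioc (b : ℕ → ℝ) (i : ℕ) : csum b i = ∑ k ∈ Ioc 0 i, b k := by
  rw [csum, ← Finset.Icc_add_one_left_eq_Ioc, zero_add]

lemma csum_sub_csum (b : ℕ → ℝ) (u m : ℕ) (h : u ≤ m) :
    csum b m - csum b u = ∑ i ∈ Ioc u m, b i := by
  rw [csum_Ioc, csum_Ioc, ← Finset.sum_Ioc_consecutive _ (Nat.zero_le u) h]
  ring

lemma csum_of_diff (g : ℕ → ℝ) (hg : g 0 = 0) (i : ℕ) :
    csum (fun k => g k - g (k - 1)) i = g i := by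
  induction i with
  | zero => simp [csum, hg]
  | succ i ih =>
      rw [csum, Finset.sum_Icc_succ_top (by omega)]
      rw [csum] at ih
      simp [ih]

lemma sum_shift (g : ℕ → ℝ) (a b : ℕ) :
    ∑ j ∈ Icc a b, g j = ∑ j ∈ Icc (a + 1) (b + 1), g (j - 1) := by
  rw [← Finset.image_add_right_Icc a b 1]
  rw [Finset.sum_image (by intro x _ y _ h; simp only at h; omega)]
  simp

lemma avg_left (b : ℕ → ℝ) (m h : ℕ) (h1 : 1 ≤ h) (hm : h ≤ m) :
    (h : ℝ) * |csum b m| ≤ (∑ u ∈ Ioc (m - h) m, |csum b u|)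
      + h * ∑ i ∈ Ioc (m - h + 1) m, |b i| := by
  have key : ∀ u ∈ Ioc (m - h) m,
      |csum b m| ≤ |csum b u| + ∑ i ∈ Ioc (m - h + 1) m, |b i| := by
    intro u hu
    simp only [Finset.mem_Ioc] at hu
    have e : csum b m - csum b u = ∑ i ∈ Ioc u m, b i := csum_sub_csum b u m hu.2
    have h3 : |csum b m| ≤ |csum b u| + |∑ i ∈ Ioc u m, b i| := by
      rw [← e]; exact (abs_add_le _ _).trans_eq' (by ring_nf)
    refine h3.trans (by
      gcongr
      refine (Finset.abs_sum_le_sum_abs _ _).trans ?_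
      exact Finset.sum_le_sum_of_subset_of_nonneg
        (Finset.Ioc_subset_Ioc_left (by omega)) (fun _ _ _ => abs_nonneg _))
  calc (h : ℝ) * |csum b m| = ∑ _u ∈ Ioc (m - h) m, |csum b m| := by
        rw [Finset.sum_const, Nat.card_Ioc]
        have : m - (m - h) = h := by omega
        rw [this]; ring
    _ ≤ ∑ u ∈ Ioc (m - h) m, (|csum b u| + ∑ i ∈ Ioc (m - h + 1) m, |b i|) :=
        Finset.sum_le_sum key
    _ = _ := by
        rw [Finset.sum_add_distrib, Finset.sum_const, Nat.card_Ioc]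
        have : m - (m - h) = h := by omega
        rw [this]; ring

lemma avg_right (b : ℕ → ℝ) (q h : ℕ) (h1 : 1 ≤ h) (hq : 1 ≤ q) :
    (h : ℝ) * |csum b q| ≤ (∑ v ∈ Ioc (q - 1) (q - 1 + h), |csum b v|)
      + h * ∑ i ∈ Ioc q (q - 1 + h), |b i| := by
  have key : ∀ v ∈ Ioc (q - 1) (q - 1 + h),
      |csum b q| ≤ |csum b v| + ∑ i ∈ Ioc q (q - 1 + h), |b i| := by
    intro v hv
    simp only [Finset.mem_Ioc] at hv
    have hqv : q ≤ v := by omega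
    have e : csum b v - csum b q = ∑ i ∈ Ioc q v, b i := csum_sub_csum b q v hqv
    have h3 : |csum b q| ≤ |csum b v| + |∑ i ∈ Ioc q v, b i| := by
      rw [← e]
      rw [abs_sub_comm]
      have := abs_sub_abs_le_abs_sub (csum b q) (csum b v)
      linarith [this]
    refine h3.trans (by
      gcongr
      refine (Finset.abs_sum_le_sum_abs _ _).trans ?_
      exact Finset.sum_le_sum_of_subset_of_nonneg
        (Finset.Ioc_subset_Ioc_right (by omega)) (fun _ _ _ => abs_nonneg _))
  calc (h : ℝ) * |csum b q| = ∑ _v ∈ Ioc (q - 1) (q - 1 + h), |csum b q| := by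
        rw [Finset.sum_const, Nat.card_Ioc]
        have : q - 1 + h - (q - 1) = h := by omega
        rw [this]; ring
    _ ≤ _ := Finset.sum_le_sum key
    _ = _ := by
        rw [Finset.sum_add_distrib, Finset.sum_const, Nat.card_Ioc]
        have : q - 1 + h - (q - 1) = h := by omega
        rw [this]; ring

lemma sum_Icc_bot (g : ℕ → ℝ) (a b : ℕ) (h : a ≤ b) :
    ∑ j ∈ Icc a b, g j = g a + ∑ j ∈ Icc (a + 1) b, g j := by
  rw [← Finset.insert_Icc_add_one_left_eq_Icc h, Finset.sum_insert (by simp)]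

noncomputable def Kc (d : ℕ → ℕ) (s : ℕ) : ℝ :=
  1 / (d 1 : ℝ) + (∑ j ∈ Finset.Icc 2 s, 4 / (d j : ℝ)) + 1 / (d (s + 1) : ℝ)

section main

variable (n s : ℕ) (d : ℕ → ℕ)

lemma Kc_pos (hs : 1 ≤ s) (hd : ∀ j ∈ Finset.Icc 1 (s + 1), 2 ≤ d j) : 0 < Kc d s := by
  have h1 : (0:ℝ) < d 1 := by
    have := hd 1 (by simp [Finset.mem_Icc]); exact_mod_cast by omega
  have h2 : (0:ℝ) < d (s+1) := by
    have := hd (s+1) (by simp [Finset.mem_Icc]); exact_mod_cast by omega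
  have h3 : (0:ℝ) ≤ ∑ j ∈ Finset.Icc 2 s, 4 / (d j : ℝ) :=
    Finset.sum_nonneg (fun j _ => by positivity)
  have h4 : (0:ℝ) < 1 / (d 1 : ℝ) := by positivity
  have h5 : (0:ℝ) < 1 / (d (s+1) : ℝ) := by positivity
  unfold Kc; linarith

lemma pos_lt_pos (hd : ∀ j ∈ Finset.Icc 1 (s + 1), 2 ≤ d j) :
    ∀ j k : ℕ, j < k → k ≤ s + 1 → pos d j + 2 ≤ pos d k := by
  intro j k hjk hk
  have h1 : pos d (j + 1) = pos d j + d (j + 1) := pos_succ d j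
  have h2 : 2 ≤ d (j + 1) := hd (j + 1) (by simp [Finset.mem_Icc]; omega)
  have h3 : pos d (j + 1) ≤ pos d k := pos_mono d (by omega)
  omega

end main

lemma member_key (n s : ℕ) (d : ℕ → ℕ) (hs : 1 ≤ s)
    (hd : ∀ j ∈ Finset.Icc 1 (s + 1), 2 ≤ d j)
    (hsum : ∑ j ∈ Finset.Icc 1 (s + 1), d j = n) :
    ∃ b : ℕ → ℝ,
      (∑ j ∈ jumpSet d s, |b j|) -
          (∑ j ∈ Finset.Icc 2 n \ jumpSet d s, |b j|) = 1 ∧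
      (∑ i ∈ Finset.Icc 1 n, (csum b i) ^ 2) = 1 / Kc d s := by
  classical
  set K := Kc d s with hK
  have hKpos : 0 < K := Kc_pos s d hs hd
  have hKne : K ≠ 0 := ne_of_gt hKpos
  have hPn : pos d (s + 1) = n := hsum
  have hplt := pos_lt_pos s d hd
  have hdpos : ∀ j, 1 ≤ j → j ≤ s + 1 → (0:ℝ) < d j := fun j h1 h2 => by
    have := hd j (Finset.mem_Icc.2 ⟨h1, h2⟩)
    exact_mod_cast (by omega : (0:ℕ) < d j)
  set w : ℕ → ℝ := fun j => if j = 1 ∨ j = s + 1 then 1 else 2 with hw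
  set cc : ℕ → ℝ := fun j => w j / (d j * K) with hcc
  set aa : ℕ → ℝ := fun j => (-1 : ℝ) ^ (j + 1) * cc j with haa
  set f : ℕ → ℝ := fun i => ∑ j ∈ Finset.Icc 1 (s + 1),
      if pos d (j - 1) < i ∧ i ≤ pos d j then aa j else 0 with hf
  have hwpos : ∀ j, 0 < w j := fun j => by
    by_cases h : j = 1 ∨ j = s + 1 <;> simp [hw, h]
  have hccpos : ∀ j, 1 ≤ j → j ≤ s + 1 → 0 < cc j := fun j h1 h2 => by
    rw [hcc]
    exact div_pos (hwpos j) (mul_pos (hdpos j h1 h2) hKpos)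
  have hf0 : f 0 = 0 := by simp [hf]
  have hfP : ∀ j, 1 ≤ j → j ≤ s + 1 → f (pos d j) = aa j := by
    intro j h1 h2
    have e := pos_eq d j h1
    have hdj := hd j (Finset.mem_Icc.2 ⟨h1, h2⟩)
    rw [hf]
    exact indicator_eval d aa (s + 1) j (pos d j) h1 h2 (by omega) le_rfl
  have hfP1 : ∀ j, j ≤ s → f (pos d j + 1) = aa (j + 1) := by
    intro j hj
    have e : pos d (j + 1) = pos d j + d (j + 1) := pos_succ d j
    have hdj : 2 ≤ d (j + 1) := hd _ (Finset.mem_Icc.2 ⟨by omega, by omega⟩)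
    rw [hf]
    have := indicator_eval d aa (s + 1) (j + 1) (pos d j + 1) (by omega) (by omega)
      (by simp only [Nat.add_sub_cancel]; omega) (by omega)
    exact this
  have hw1 : w 1 = 1 := by simp [hw]
  have hws : w (s + 1) = 1 := by simp [hw]
  have hWsum : ∑ j ∈ Finset.Icc 1 (s + 1), w j * cc j = 1 := by
    have expand : ∀ j ∈ Finset.Icc 1 (s + 1), w j * cc j = w j * w j / d j * K⁻¹ := by
      intro j hj
      simp only [Finset.mem_Icc] at hj
      have hdj := hdpos j hj.1 hj.2
      rw [hcc]
      simp only
      field_simp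
    rw [Finset.sum_congr rfl expand, ← Finset.sum_mul]
    have hKsum : ∑ j ∈ Finset.Icc 1 (s + 1), w j * w j / d j = K := by
      have e1 : ∑ j ∈ Finset.Icc 2 s, w j * w j / (d j : ℝ) =
          ∑ j ∈ Finset.Icc 2 s, 4 / (d j : ℝ) := by
        apply Finset.sum_congr rfl
        intro j hj
        simp only [Finset.mem_Icc] at hj
        have hne : ¬(j = 1 ∨ j = s + 1) := by omega
        rw [hw]
        norm_num [hne]
      rw [sum_Icc_bot (fun j => w j * w j / (d j : ℝ)) 1 (s + 1) (by omega),
        Finset.sum_Icc_succ_top (by omega : 2 ≤ s + 1) (fun j => w j * w j / (d j : ℝ))]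
      beta_reduce
      rw [e1, hw1, hws, hK]
      unfold Kc
      ring
    rw [hKsum, mul_inv_cancel₀ hKne]
  refine ⟨fun i => f i - f (i - 1), ?_, ?_⟩
  · -- constraint
    have hJ : ∑ i ∈ jumpSet d s, |f i - f (i - 1)| =
        ∑ j ∈ Finset.Icc 1 s, (cc j + cc (j + 1)) := by
      rw [jumpSet, Finset.sum_image (by
        intro x hx y hy hxy
        simp only [Finset.mem_coe, Finset.mem_Icc] at hx hy hxy
        by_contra hne
        rcases Nat.lt_or_ge x y with h | h
        · have := hplt x y h (by omega); omega
        · have := hplt y x (by omega) (by omega); omega)]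
      apply Finset.sum_congr rfl
      intro j hj
      simp only [Finset.mem_Icc] at hj
      have e1 : pos d j + 1 - 1 = pos d j := by omega
      rw [e1, hfP1 j hj.2, hfP j hj.1 (by omega)]
      have key : aa (j + 1) - aa j = (-1 : ℝ) ^ j * (cc (j + 1) + cc j) := by
        rw [haa]
        simp only
        rw [pow_succ, pow_succ]
        ring
      rw [key, abs_mul, abs_pow, abs_neg, abs_one, one_pow, one_mul,
        abs_of_nonneg (by
          have h1 := hccpos (j + 1) (by omega) (by omega)
          have h2 := hccpos j (by omega) (by omega)
          linarith)]
      ring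
    have hshift : ∑ j ∈ Finset.Icc 1 s, cc (j + 1) = ∑ j ∈ Finset.Icc 2 (s + 1), cc j := by
      rw [sum_shift (fun j => cc (j + 1)) 1 s]
      apply Finset.sum_congr rfl
      intro j hj
      simp only [Finset.mem_Icc] at hj
      congr 1
      omega
    have hint : ∀ j ∈ Finset.Icc 2 s, w j * cc j = 2 * cc j := by
      intro j hj
      simp only [Finset.mem_Icc] at hj
      have : ¬(j = 1 ∨ j = s + 1) := by omega
      rw [hw]
      simp only [this, if_false]
    have hsum1 : ∑ j ∈ Finset.Icc 1 s, (cc j + cc (j + 1)) =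
        ∑ j ∈ Finset.Icc 1 (s + 1), w j * cc j := by
      rw [Finset.sum_add_distrib, hshift, sum_Icc_bot cc 1 s hs,
        Finset.sum_Icc_succ_top (by omega : 2 ≤ s + 1) cc,
        sum_Icc_bot (fun j => w j * cc j) 1 (s + 1) (by omega),
        Finset.sum_Icc_succ_top (by omega : 2 ≤ s + 1) (fun j => w j * cc j),
        Finset.sum_congr rfl hint, hw1, hws, ← Finset.mul_sum]
      norm_num
      ring
    have hO : ∑ i ∈ Finset.Icc 2 n \ jumpSet d s, |f i - f (i - 1)| = 0 := by
      apply Finset.sum_eq_zero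
      intro i hi
      rw [Finset.mem_sdiff, Finset.mem_Icc] at hi
      obtain ⟨⟨hi2, hin⟩, hnj⟩ := hi
      obtain ⟨j, hj1, hj2, hj3, hj4⟩ := exists_block d (s + 1) i (by omega)
        (by rw [hPn]; exact hin)
      have hfi : f i = aa j := by
        rw [hf]; exact indicator_eval d aa (s + 1) j i hj1 hj2 hj3 hj4
      have hi1 : pos d (j - 1) < i - 1 := by
        rcases Nat.lt_or_ge (pos d (j - 1)) (i - 1) with h | h
        · exact h
        · exfalso
          have hieq : i = pos d (j - 1) + 1 := by omega
          by_cases hj : j = 1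
          · rw [hj] at hieq
            simp [pos_zero] at hieq
            omega
          · apply hnj
            rw [jumpSet, Finset.mem_image]
            exact ⟨j - 1, Finset.mem_Icc.2 ⟨by omega, by omega⟩, by omega⟩
      have hfi1 : f (i - 1) = aa j := by
        rw [hf]; exact indicator_eval d aa (s + 1) j (i - 1) hj1 hj2 hi1 (by omega)
      rw [hfi, hfi1]
      simp
    simp only
    rw [hJ, hsum1, hWsum, hO]
    ring
  · -- objective value
    have hcs : ∀ i, csum (fun k => f k - f (k - 1)) i = f i := csum_of_diff f hf0
    calc ∑ i ∈ Finset.Icc 1 n, (csum (fun k => f k - f (k - 1)) i) ^ 2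
        = ∑ i ∈ Ioc 0 (pos d (s + 1)), f i ^ 2 := by
          rw [hPn, ← Finset.Icc_add_one_left_eq_Ioc]
          exact Finset.sum_congr rfl (fun i _ => by rw [hcs])
      _ = ∑ j ∈ Finset.Icc 1 (s + 1), ∑ i ∈ Ioc (pos d (j - 1)) (pos d j), f i ^ 2 :=
          (sum_Ioc_blocks d (fun i => f i ^ 2) (s + 1)).symm
      _ = ∑ j ∈ Finset.Icc 1 (s + 1), (d j : ℝ) * aa j ^ 2 := by
          apply Finset.sum_congr rfl
          intro j hj
          simp only [Finset.mem_Icc] at hj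
          have hcongr : ∀ i ∈ Ioc (pos d (j - 1)) (pos d j), f i ^ 2 = aa j ^ 2 := by
            intro i hi
            simp only [Finset.mem_Ioc] at hi
            have : f i = aa j := by
              rw [hf]; exact indicator_eval d aa (s + 1) j i hj.1 hj.2 hi.1 hi.2
            rw [this]
          rw [Finset.sum_congr rfl hcongr, Finset.sum_const, Nat.card_Ioc,
            pos_eq d j hj.1, nsmul_eq_mul]
          congr 2
          omega
      _ = ∑ j ∈ Finset.Icc 1 (s + 1), (w j * cc j) * K⁻¹ := by
          apply Finset.sum_congr rfl
          intro j hj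
          simp only [Finset.mem_Icc] at hj
          have hdj := hdpos j hj.1 hj.2
          have haa2 : aa j ^ 2 = cc j ^ 2 := by
            rw [haa]
            simp only
            rw [mul_pow, ← pow_mul, mul_comm (j + 1) 2, pow_mul]
            norm_num
          rw [haa2, hcc]
          simp only
          field_simp
      _ = 1 / K := by
          rw [← Finset.sum_mul]
          rw [hWsum, one_mul, one_div]

lemma lower_key (n s : ℕ) (d : ℕ → ℕ) (hs : 1 ≤ s)
    (hd : ∀ j ∈ Finset.Icc 1 (s + 1), 2 ≤ d j)
    (heven : ∀ j ∈ Finset.Icc 2 s, Even (d j))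
    (hsum : ∑ j ∈ Finset.Icc 1 (s + 1), d j = n) (b : ℕ → ℝ)
    (hb : (∑ j ∈ jumpSet d s, |b j|) -
        (∑ j ∈ Finset.Icc 2 n \ jumpSet d s, |b j|) = 1) :
    1 ≤ Kc d s * ∑ i ∈ Finset.Icc 1 n, (csum b i) ^ 2 := by
  classical
  have hPn : pos d (s + 1) = n := hsum
  have hplt := pos_lt_pos s d hd
  have hdn : ∀ j, 1 ≤ j → j ≤ s + 1 → 2 ≤ d j := fun j h1 h2 =>
    hd j (Finset.mem_Icc.2 ⟨h1, h2⟩)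
  have heven' : ∀ j, 2 ≤ j → j ≤ s → d j % 2 = 0 := fun j h1 h2 =>
    Nat.even_iff.1 (heven j (Finset.mem_Icc.2 ⟨h1, h2⟩))
  set w : ℕ → ℝ := fun j => if j = 1 ∨ j = s + 1 then 1 else 2 with hw
  set hL : ℕ → ℕ := fun j => if j = 1 then d 1 else d j / 2 with hhL
  set hR : ℕ → ℕ := fun j => if j = s then d (s + 1) else d (j + 1) / 2 with hhR
  set E : ℕ → Finset ℕ := fun j =>
    Ioc (pos d j - hL j + 1) (pos d j) ∪ Ioc (pos d j + 1) (pos d j + hR j) with hE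
  -- basic bounds on hL, hR
  have hL1 : ∀ j, 1 ≤ j → j ≤ s → 1 ≤ hL j ∧ hL j ≤ d j := by
    intro j h1 h2
    rw [hhL]
    have := hdn 1 le_rfl (by omega)
    by_cases hj : j = 1
    · subst hj; simp; omega
    · have := hdn j h1 (by omega)
      simp [hj]
      omega
  have hR1 : ∀ j, 1 ≤ j → j ≤ s → 1 ≤ hR j ∧ hR j ≤ d (j + 1) := by
    intro j h1 h2
    rw [hhR]
    have := hdn (s + 1) (by omega) le_rfl
    by_cases hj : j = s
    · subst hj; simp; omega
    · have := hdn (j + 1) (by omega) (by omega)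
      simp [hj]
      omega
  have hLP : ∀ j, 1 ≤ j → j ≤ s → pos d (j - 1) + hL j ≤ pos d j := by
    intro j h1 h2
    have := pos_eq d j h1
    have := (hL1 j h1 h2).2
    omega
  -- step (2): per-jump bound
  have step : ∀ j ∈ Finset.Icc 1 s,
      |b (pos d j + 1)| ≤
        (1 / (hL j : ℝ)) * (∑ u ∈ Ioc (pos d j - hL j) (pos d j), |csum b u|)
        + (1 / (hR j : ℝ)) * (∑ v ∈ Ioc (pos d j) (pos d j + hR j), |csum b v|)
        + ∑ i ∈ E j, |b i| := by
    intro j hj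
    simp only [Finset.mem_Icc] at hj
    obtain ⟨hLa, hLb⟩ := hL1 j hj.1 hj.2
    obtain ⟨hRa, hRb⟩ := hR1 j hj.1 hj.2
    have hLpos : (0:ℝ) < hL j := by exact_mod_cast hLa
    have hRpos : (0:ℝ) < hR j := by exact_mod_cast hRa
    have hLP' := hLP j hj.1 hj.2
    have hPj1 : 1 ≤ pos d j := by
      have := pos_eq d j hj.1
      have := hdn j hj.1 (by omega)
      omega
    -- |b (P j + 1)| ≤ F (P j + 1) + F (P j)
    have hb1 : |b (pos d j + 1)| ≤ |csum b (pos d j + 1)| + |csum b (pos d j)| := by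
      have e : csum b (pos d j + 1) - csum b (pos d j) = b (pos d j + 1) := by
        rw [csum_sub_csum b (pos d j) (pos d j + 1) (Nat.le_succ _),
          Nat.Ioc_succ_singleton, Finset.sum_singleton]
      rw [← e]
      exact abs_sub _ _
    have hA := avg_left b (pos d j) (hL j) hLa (by omega : hL j ≤ pos d j)
    have hB := avg_right b (pos d j + 1) (hR j) hRa (by omega)
    simp only [Nat.add_sub_cancel] at hB
    have hdivL : |csum b (pos d j)| ≤
        (1 / (hL j : ℝ)) * (∑ u ∈ Ioc (pos d j - hL j) (pos d j), |csum b u|)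
          + ∑ i ∈ Ioc (pos d j - hL j + 1) (pos d j), |b i| := by
      have h2 : (hL j : ℝ) * |csum b (pos d j)| ≤ (hL j : ℝ) *
          ((1 / (hL j : ℝ)) * (∑ u ∈ Ioc (pos d j - hL j) (pos d j), |csum b u|)
            + ∑ i ∈ Ioc (pos d j - hL j + 1) (pos d j), |b i|) := by
        rw [mul_add, ← mul_assoc, mul_one_div, div_self (ne_of_gt hLpos), one_mul]
        exact hA
      exact le_of_mul_le_mul_left h2 hLpos
    have hdivR : |csum b (pos d j + 1)| ≤
        (1 / (hR j : ℝ)) * (∑ v ∈ Ioc (pos d j) (pos d j + hR j), |csum b v|)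
          + ∑ i ∈ Ioc (pos d j + 1) (pos d j + hR j), |b i| := by
      have h2 : (hR j : ℝ) * |csum b (pos d j + 1)| ≤ (hR j : ℝ) *
          ((1 / (hR j : ℝ)) * (∑ v ∈ Ioc (pos d j) (pos d j + hR j), |csum b v|)
            + ∑ i ∈ Ioc (pos d j + 1) (pos d j + hR j), |b i|) := by
        rw [mul_add, ← mul_assoc, mul_one_div, div_self (ne_of_gt hRpos), one_mul]
        exact hB
      exact le_of_mul_le_mul_left h2 hRpos
    have hEsum : ∑ i ∈ E j, |b i| =
        (∑ i ∈ Ioc (pos d j - hL j + 1) (pos d j), |b i|)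
          + ∑ i ∈ Ioc (pos d j + 1) (pos d j + hR j), |b i| := by
      rw [hE]
      simp only
      rw [Finset.sum_union (by
        apply Finset.disjoint_left.mpr
        intro x h1 h2
        simp only [Finset.mem_Ioc] at h1 h2
        omega)]
    rw [hEsum]
    linarith
  -- (1) jump sum as sum over Icc 1 s
  have hJ : ∑ i ∈ jumpSet d s, |b i| = ∑ j ∈ Finset.Icc 1 s, |b (pos d j + 1)| := by
    rw [jumpSet, Finset.sum_image (by
      intro x hx y hy hxy
      simp only [Finset.mem_coe, Finset.mem_Icc] at hx hy hxy
      by_contra hne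
      rcases Nat.lt_or_ge x y with h | h
      · have := hplt x y h (by omega); omega
      · have := hplt y x (by omega) (by omega); omega)]
  -- (4) edge bound
  have hmemE : ∀ j, 1 ≤ j → j ≤ s → ∀ i ∈ E j,
      pos d j - hL j + 2 ≤ i ∧ i ≤ pos d j + hR j ∧ i ≠ pos d j + 1 := by
    intro j h1 h2 i hi
    rw [hE] at hi
    simp only [Finset.mem_union, Finset.mem_Ioc] at hi
    rcases hi with h | h
    · omega
    · omega
  have hC1 : ∀ j k, 1 ≤ j → j < k → k ≤ s → pos d j + hR j + hL k ≤ pos d k := by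
    intro j k h1 h2 h3
    have e1 : pos d (j + 1) = pos d j + d (j + 1) := pos_succ d j
    have e2 : pos d k = pos d (k - 1) + d k := pos_eq d k (by omega)
    have hRj : hR j = d (j + 1) / 2 := by rw [hhR]; simp [show j ≠ s by omega]
    have hLk : hL k = d k / 2 := by rw [hhL]; simp [show k ≠ 1 by omega]
    rcases Nat.lt_or_ge (j + 1) k with h | h
    · have m1 : pos d (j + 1) ≤ pos d (k - 1) := pos_mono d (by omega)
      have := hdn (j + 1) (by omega) (by omega)
      have := hdn k (by omega) (by omega)
      omega
    · have hk : k = j + 1 := by omega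
      subst hk
      have he : d (j + 1) % 2 = 0 := heven' (j + 1) (by omega) (by omega)
      omega
  have hkey : ∀ x y, 1 ≤ x → x < y → y ≤ s → Disjoint (E x) (E y) := by
    intro x y h1 h2 h3
    apply Finset.disjoint_left.mpr
    intro i hix hiy
    have hbx := hmemE x h1 (by omega) i hix
    have hby := hmemE y (by omega) h3 i hiy
    have := hC1 x y h1 h2 h3
    omega
  have hdisj : (↑(Finset.Icc 1 s) : Set ℕ).PairwiseDisjoint E := by
    intro x hx y hy hxy
    simp only [Finset.coe_Icc, Set.mem_Icc] at hx hy
    rcases Nat.lt_or_ge x y with h | h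
    · exact hkey x y hx.1 h hy.2
    · exact (hkey y x hy.1 (by omega) hx.2).symm
  have hsub : (Finset.Icc 1 s).biUnion E ⊆ Finset.Icc 2 n \ jumpSet d s := by
    intro i hi
    rw [Finset.mem_biUnion] at hi
    obtain ⟨j, hj, hij⟩ := hi
    simp only [Finset.mem_Icc] at hj
    have hm := hmemE j hj.1 hj.2 i hij
    have hRb := (hR1 j hj.1 hj.2).2
    have hLb := (hL1 j hj.1 hj.2).2
    have e1 : pos d (j + 1) = pos d j + d (j + 1) := pos_succ d j
    have hup : pos d (j + 1) ≤ pos d (s + 1) := pos_mono d (by omega)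
    have hlow := hLP j hj.1 hj.2
    rw [Finset.mem_sdiff, Finset.mem_Icc]
    refine ⟨⟨by omega, by omega⟩, ?_⟩
    rw [jumpSet, Finset.mem_image]
    rintro ⟨k, hk, hki⟩
    simp only [Finset.mem_Icc] at hk
    have hki' : pos d k + 1 = i := hki
    rcases lt_trichotomy k j with h | h | h
    · have m1 : pos d k ≤ pos d (j - 1) := pos_mono d (by omega)
      omega
    · subst h; omega
    · have m1 : pos d (j + 1) ≤ pos d k := pos_mono d (by omega)
      omega
  have hES : ∑ j ∈ Finset.Icc 1 s, ∑ i ∈ E j, |b i| ≤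
      ∑ i ∈ Finset.Icc 2 n \ jumpSet d s, |b i| :=
    (Finset.sum_biUnion hdisj).symm.trans_le
      (Finset.sum_le_sum_of_subset_of_nonneg hsub (fun _ _ _ => abs_nonneg _))
  -- (5) block sum identity
  set B : ℕ → ℝ := fun j => ∑ i ∈ Ioc (pos d (j - 1)) (pos d j), |csum b i| with hB
  have hT : ∑ j ∈ Finset.Icc 1 s,
      ((1 / (hL j : ℝ)) * (∑ u ∈ Ioc (pos d j - hL j) (pos d j), |csum b u|)
        + (1 / (hR j : ℝ)) * (∑ v ∈ Ioc (pos d j) (pos d j + hR j), |csum b v|))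
      = ∑ j ∈ Finset.Icc 1 (s + 1), (w j / d j) * B j := by
    have e1 : ∑ j ∈ Finset.Icc 1 s,
        ((1 / (hL j : ℝ)) * (∑ u ∈ Ioc (pos d j - hL j) (pos d j), |csum b u|)
          + (1 / (hR j : ℝ)) * (∑ v ∈ Ioc (pos d j) (pos d j + hR j), |csum b v|))
        = (∑ j ∈ Finset.Icc 1 s,
            (1 / (hL j : ℝ)) * (∑ u ∈ Ioc (pos d j - hL j) (pos d j), |csum b u|))
          + ∑ j ∈ Finset.Icc 1 s,
            (1 / (hR j : ℝ)) * (∑ v ∈ Ioc (pos d j) (pos d j + hR j), |csum b v|) :=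
      Finset.sum_add_distrib
    have e2 : ∑ j ∈ Finset.Icc 1 s,
        (1 / (hR j : ℝ)) * (∑ v ∈ Ioc (pos d j) (pos d j + hR j), |csum b v|)
        = ∑ j ∈ Finset.Icc 2 (s + 1),
            (1 / (hR (j - 1) : ℝ)) *
              ∑ v ∈ Ioc (pos d (j - 1)) (pos d (j - 1) + hR (j - 1)), |csum b v| :=
      sum_shift _ 1 s
    have e3 : ∑ j ∈ Finset.Icc 1 s,
        (1 / (hL j : ℝ)) * (∑ u ∈ Ioc (pos d j - hL j) (pos d j), |csum b u|)
        = (1 / (hL 1 : ℝ)) * (∑ u ∈ Ioc (pos d 1 - hL 1) (pos d 1), |csum b u|)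
          + ∑ j ∈ Finset.Icc 2 s,
              (1 / (hL j : ℝ)) * (∑ u ∈ Ioc (pos d j - hL j) (pos d j), |csum b u|) :=
      sum_Icc_bot _ 1 s hs
    have e4 : ∑ j ∈ Finset.Icc 2 (s + 1),
        (1 / (hR (j - 1) : ℝ)) *
          ∑ v ∈ Ioc (pos d (j - 1)) (pos d (j - 1) + hR (j - 1)), |csum b v|
        = (∑ j ∈ Finset.Icc 2 s,
            (1 / (hR (j - 1) : ℝ)) *
              ∑ v ∈ Ioc (pos d (j - 1)) (pos d (j - 1) + hR (j - 1)), |csum b v|)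
          + (1 / (hR s : ℝ)) * ∑ v ∈ Ioc (pos d s) (pos d s + hR s), |csum b v| := by
      rw [Finset.sum_Icc_succ_top (show 2 ≤ s + 1 by omega)]
      simp only [Nat.add_sub_cancel]
    have e5 : ∑ j ∈ Finset.Icc 1 (s + 1), (w j / d j) * B j
        = (w 1 / d 1) * B 1
          + ((∑ j ∈ Finset.Icc 2 s, (w j / d j) * B j) + (w (s + 1) / d (s + 1)) * B (s + 1)) := by
      rw [sum_Icc_bot _ 1 (s + 1) (by omega),
        Finset.sum_Icc_succ_top (show 2 ≤ s + 1 by omega)]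
    have hend1 : (1 / (hL 1 : ℝ)) * (∑ u ∈ Ioc (pos d 1 - hL 1) (pos d 1), |csum b u|)
        = (w 1 / d 1) * B 1 := by
      have h1 : hL 1 = d 1 := by rw [hhL]; simp
      have h2 : pos d 1 = pos d 0 + d 1 := pos_eq d 1 le_rfl
      have h0 : pos d 0 = 0 := pos_zero d
      have hset : Ioc (pos d 1 - hL 1) (pos d 1) = Ioc (pos d (1 - 1)) (pos d 1) := by
        have h00 : (1:ℕ) - 1 = 0 := rfl
        rw [h00]
        congr 1
        omega
      have hw1 : w 1 = 1 := by rw [hw]; simp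
      rw [hset, hB, hw1, h1]
    have hend2 : (1 / (hR s : ℝ)) * (∑ v ∈ Ioc (pos d s) (pos d s + hR s), |csum b v|)
        = (w (s + 1) / d (s + 1)) * B (s + 1) := by
      have h1 : hR s = d (s + 1) := by rw [hhR]; simp
      have h2 : pos d (s + 1) = pos d s + d (s + 1) := pos_succ d s
      have hset : Ioc (pos d s) (pos d s + hR s) = Ioc (pos d (s + 1 - 1)) (pos d (s + 1)) := by
        simp only [Nat.add_sub_cancel]
        congr 1
        omega
      have hws : w (s + 1) = 1 := by rw [hw]; simp
      rw [hset, hB, hws, h1]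
    have hmid : ∀ j ∈ Finset.Icc 2 s,
        (1 / (hL j : ℝ)) * (∑ u ∈ Ioc (pos d j - hL j) (pos d j), |csum b u|)
          + (1 / (hR (j - 1) : ℝ)) *
              (∑ v ∈ Ioc (pos d (j - 1)) (pos d (j - 1) + hR (j - 1)), |csum b v|)
        = (w j / d j) * B j := by
      intro j hj
      simp only [Finset.mem_Icc] at hj
      have hLj : hL j = d j / 2 := by rw [hhL]; simp [show j ≠ 1 by omega]
      have hRj : hR (j - 1) = d j / 2 := by
        rw [hhR]
        simp [show j - 1 ≠ s by omega, show j - 1 + 1 = j by omega]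
      have he : d j % 2 = 0 := heven' j hj.1 hj.2
      have hdj : 2 ≤ d j := hdn j (by omega) (by omega)
      have hpe : pos d j = pos d (j - 1) + d j := pos_eq d j (by omega)
      have hset1 : Ioc (pos d j - hL j) (pos d j)
          = Ioc (pos d (j - 1) + d j / 2) (pos d j) := by congr 1; omega
      have hset2 : Ioc (pos d (j - 1)) (pos d (j - 1) + hR (j - 1))
          = Ioc (pos d (j - 1)) (pos d (j - 1) + d j / 2) := by congr 1; omega
      have hsplit : (∑ v ∈ Ioc (pos d (j - 1)) (pos d (j - 1) + d j / 2), |csum b v|)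
          + ∑ u ∈ Ioc (pos d (j - 1) + d j / 2) (pos d j), |csum b u| = B j := by
        rw [hB]
        exact Finset.sum_Ioc_consecutive _ (by omega) (by omega)
      have hwj : w j = 2 := by rw [hw]; simp [show ¬(j = 1 ∨ j = s + 1) by omega]
      have hcast : (d j : ℝ) = 2 * ((d j / 2 : ℕ) : ℝ) := by
        exact_mod_cast congrArg (Nat.cast (R := ℝ)) (by omega : d j = 2 * (d j / 2))
      have hhalf : ((d j / 2 : ℕ) : ℝ) ≠ 0 := by
        have : 1 ≤ d j / 2 := by omega
        exact_mod_cast by omega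
      rw [hset1, hset2, hLj, hRj, hwj, ← hsplit, hcast]
      field_simp
      ring
    have e6 : ∑ j ∈ Finset.Icc 2 s,
        (1 / (hL j : ℝ)) * (∑ u ∈ Ioc (pos d j - hL j) (pos d j), |csum b u|)
        + ∑ j ∈ Finset.Icc 2 s,
          (1 / (hR (j - 1) : ℝ)) *
            (∑ v ∈ Ioc (pos d (j - 1)) (pos d (j - 1) + hR (j - 1)), |csum b v|)
        = ∑ j ∈ Finset.Icc 2 s, (w j / d j) * B j := by
      rw [← Finset.sum_add_distrib]
      exact Finset.sum_congr rfl hmid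
    rw [e1, e2, e3, e4, e5]
    linarith [hend1, hend2, e6]
  -- (6) pointwise coefficient function
  set cf : ℕ → ℝ := fun i => ∑ j ∈ Finset.Icc 1 (s + 1),
      if pos d (j - 1) < i ∧ i ≤ pos d j then w j / d j else 0 with hcf
  have hSc : ∑ i ∈ Ioc 0 (pos d (s + 1)), cf i * |csum b i|
      = ∑ j ∈ Finset.Icc 1 (s + 1), (w j / d j) * B j := by
    rw [← sum_Ioc_blocks d (fun i => cf i * |csum b i|) (s + 1)]
    apply Finset.sum_congr rfl
    intro j hj
    simp only [Finset.mem_Icc] at hj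
    have hc : ∀ i ∈ Ioc (pos d (j - 1)) (pos d j), cf i * |csum b i| = (w j / d j) * |csum b i| := by
      intro i hi
      simp only [Finset.mem_Ioc] at hi
      have : cf i = w j / d j := by
        rw [hcf]
        exact indicator_eval d (fun j => w j / d j) (s + 1) j i hj.1 hj.2 hi.1 hi.2
      rw [this]
    rw [Finset.sum_congr rfl hc, ← Finset.mul_sum, hB]
  have hc2 : ∑ i ∈ Ioc 0 (pos d (s + 1)), cf i ^ 2 = Kc d s := by
    rw [← sum_Ioc_blocks d (fun i => cf i ^ 2) (s + 1)]
    have step1 : ∀ j ∈ Finset.Icc 1 (s + 1),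
        ∑ i ∈ Ioc (pos d (j - 1)) (pos d j), cf i ^ 2 = (d j : ℝ) * (w j / d j) ^ 2 := by
      intro j hj
      simp only [Finset.mem_Icc] at hj
      have hc : ∀ i ∈ Ioc (pos d (j - 1)) (pos d j), cf i ^ 2 = (w j / d j) ^ 2 := by
        intro i hi
        simp only [Finset.mem_Ioc] at hi
        have : cf i = w j / d j := by
          rw [hcf]
          exact indicator_eval d (fun j => w j / d j) (s + 1) j i hj.1 hj.2 hi.1 hi.2
        rw [this]
      rw [Finset.sum_congr rfl hc, Finset.sum_const, Nat.card_Ioc, pos_eq d j hj.1,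
        nsmul_eq_mul]
      congr 2
      omega
    rw [Finset.sum_congr rfl step1]
    have hd1 : (0:ℝ) < d 1 := by
      have := hdn 1 le_rfl (by omega); exact_mod_cast by omega
    have hds1 : (0:ℝ) < d (s + 1) := by
      have := hdn (s + 1) (by omega) le_rfl; exact_mod_cast by omega
    have hw1 : w 1 = 1 := by rw [hw]; simp
    have hws : w (s + 1) = 1 := by rw [hw]; simp
    rw [sum_Icc_bot (fun j => (d j : ℝ) * (w j / d j) ^ 2) 1 (s + 1) (by omega),
      Finset.sum_Icc_succ_top (show 2 ≤ s + 1 by omega) (fun j => (d j : ℝ) * (w j / d j) ^ 2)]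
    beta_reduce
    have hmid : ∀ j ∈ Finset.Icc 2 s, (d j : ℝ) * (w j / d j) ^ 2 = 4 / d j := by
      intro j hj
      simp only [Finset.mem_Icc] at hj
      have hwj : w j = 2 := by rw [hw]; simp [show ¬(j = 1 ∨ j = s + 1) by omega]
      have hdj : (0:ℝ) < d j := by
        have := hdn j (by omega) (by omega); exact_mod_cast by omega
      rw [hwj]
      field_simp
      ring
    rw [Finset.sum_congr rfl hmid, hw1, hws]
    unfold Kc
    have t1 : (d 1 : ℝ) * (1 / d 1) ^ 2 = 1 / d 1 := by
      field_simp
    have t2 : (d (s + 1) : ℝ) * (1 / d (s + 1)) ^ 2 = 1 / d (s + 1) := by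
      field_simp
    rw [t1, t2]
    ring
  -- (7) conclude
  have h1le : 1 ≤ ∑ i ∈ Ioc 0 (pos d (s + 1)), cf i * |csum b i| := by
    have s1 : ∑ j ∈ Finset.Icc 1 s, |b (pos d j + 1)| ≤
        ∑ j ∈ Finset.Icc 1 s,
          ((1 / (hL j : ℝ)) * (∑ u ∈ Ioc (pos d j - hL j) (pos d j), |csum b u|)
            + (1 / (hR j : ℝ)) * (∑ v ∈ Ioc (pos d j) (pos d j + hR j), |csum b v|)
            + ∑ i ∈ E j, |b i|) := Finset.sum_le_sum step
    have s2 : ∑ j ∈ Finset.Icc 1 s,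
        ((1 / (hL j : ℝ)) * (∑ u ∈ Ioc (pos d j - hL j) (pos d j), |csum b u|)
          + (1 / (hR j : ℝ)) * (∑ v ∈ Ioc (pos d j) (pos d j + hR j), |csum b v|)
          + ∑ i ∈ E j, |b i|)
        = (∑ j ∈ Finset.Icc 1 s,
            ((1 / (hL j : ℝ)) * (∑ u ∈ Ioc (pos d j - hL j) (pos d j), |csum b u|)
              + (1 / (hR j : ℝ)) * (∑ v ∈ Ioc (pos d j) (pos d j + hR j), |csum b v|)))
          + ∑ j ∈ Finset.Icc 1 s, ∑ i ∈ E j, |b i| := Finset.sum_add_distrib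
    linarith [hb, hJ, s1, s2, hES, hT, hSc]
  have habs2 : ∑ i ∈ Ioc 0 (pos d (s + 1)), |csum b i| ^ 2
      = ∑ i ∈ Finset.Icc 1 n, (csum b i) ^ 2 := by
    rw [hPn, ← Finset.Icc_add_one_left_eq_Ioc]
    exact Finset.sum_congr rfl (fun i _ => sq_abs _)
  have hcs := Finset.sum_mul_sq_le_sq_mul_sq (Ioc 0 (pos d (s + 1))) cf
    (fun i => |csum b i|)
  rw [hc2, habs2] at hcs
  nlinarith [h1le, hcs]

theorem stmt13 (n s : ℕ) (hs : 1 ≤ s) (d : ℕ → ℕ)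
    (hd : ∀ j ∈ Finset.Icc 1 (s + 1), 2 ≤ d j)
    (heven : ∀ j ∈ Finset.Icc 2 s, Even (d j))
    (hsum : ∑ j ∈ Finset.Icc 1 (s + 1), d j = n) :
    sInf {c : ℝ | ∃ b : ℕ → ℝ,
        (∑ j ∈ jumpSet d s, |b j|) -
          (∑ j ∈ Finset.Icc 2 n \ jumpSet d s, |b j|) = 1 ∧
        c = ((s : ℝ) + 1) * (∑ i ∈ Finset.Icc 1 n, (csum b i) ^ 2) / n} =
      ((s : ℝ) + 1) /
        ((n : ℝ) / d 1 + (∑ j ∈ Finset.Icc 2 s, 4 * (n : ℝ) / d j) +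
          (n : ℝ) / d (s + 1)) := by
  have hKpos : 0 < Kc d s := Kc_pos s d hs hd
  have hKne : Kc d s ≠ 0 := ne_of_gt hKpos
  have hnn : 2 ≤ n := by
    have h1 : 2 ≤ d 1 := hd 1 (Finset.mem_Icc.2 ⟨le_rfl, by omega⟩)
    have h2 : d 1 ≤ ∑ j ∈ Finset.Icc 1 (s + 1), d j :=
      Finset.single_le_sum (fun _ _ => Nat.zero_le _) (Finset.mem_Icc.2 ⟨le_rfl, by omega⟩)
    omega
  have hnpos : (0:ℝ) < n := by exact_mod_cast (by omega : 0 < n)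
  have hnne : (n:ℝ) ≠ 0 := ne_of_gt hnpos
  have hden : (n : ℝ) / d 1 + (∑ j ∈ Finset.Icc 2 s, 4 * (n : ℝ) / d j) +
      (n : ℝ) / d (s + 1) = n * Kc d s := by
    unfold Kc
    rw [mul_add, mul_add, Finset.mul_sum]
    congr 1
    congr 1
    · rw [mul_one_div]
    · exact Finset.sum_congr rfl (fun j _ => by ring)
    · rw [mul_one_div]
  rw [hden]
  apply IsLeast.csInf_eq
  constructor
  · obtain ⟨b, hb, hQ⟩ := member_key n s d hs hd hsum
    refine ⟨b, hb, ?_⟩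
    rw [hQ, mul_one_div, div_div, mul_comm (Kc d s) (n:ℝ)]
  · rintro c ⟨b, hb, rfl⟩
    have h1 := lower_key n s d hs hd heven hsum b hb
    have hQ0 : 0 ≤ ∑ i ∈ Finset.Icc 1 n, (csum b i) ^ 2 :=
      Finset.sum_nonneg fun i _ => sq_nonneg _
    rw [div_le_div_iff₀ (mul_pos hnpos hKpos) hnpos]
    have hs0 : (0:ℝ) ≤ (s:ℝ) + 1 := by positivity
    have key : 0 ≤ ((s:ℝ) + 1) * n *
        (Kc d s * (∑ i ∈ Finset.Icc 1 n, (csum b i) ^ 2) - 1) :=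
      mul_nonneg (mul_nonneg hs0 hnpos.le) (by linarith)
    nlinarith [key]
end

section
/- (Lower bound part of TV compatibility.) With X the cumulative-sum matrix X_{j,i} = 1{j≥i}, S = {d₁+1, d₁+d₂+1, …, d₁+⋯+d_s+1}, each d_j even for 2 ≤ j ≤ s, and d_{s+1} = n − Σ d_j: for every b ∈ ℝⁿ with ‖b_S‖₁ − ‖b_{−(S∪{1})}‖₁ = 1 one has ‖Xb‖₂²/n ≥ 1 / ( n/d₁ + Σ_{j=2}^s 4n/d_j + n/d_{s+1} ). -/
open Finset

lemma amgm_aux {a x y : ℝ} (ha : 0 ≤ a) (hx : 0 ≤ x) (hy : 0 ≤ y)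
    (h : a ^ 2 ≤ x * y) : a ≤ (x + y) / 2 := by
  nlinarith [sq_nonneg (x - y)]

lemma csum_sub (b : ℕ → ℝ) {a c : ℕ} (h : a ≤ c) :
    csum b c - csum b a = ∑ k ∈ Finset.Ioc a c, b k := by
  unfold csum
  rw [show (Finset.Icc 1 c) = Finset.Ioc 0 c from Finset.Icc_add_one_left_eq_Ioc 0 c,
    show (Finset.Icc 1 a) = Finset.Ioc 0 a from Finset.Icc_add_one_left_eq_Ioc 0 a,
    ← Finset.sum_Ioc_consecutive b (Nat.zero_le a) h]
  ring

lemma reindex_aux (s : ℕ) (g : ℕ → ℝ) :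
    ∑ j ∈ Finset.Icc 2 (s+1), g j = ∑ j ∈ Finset.Icc 1 s, g (j+1) := by
  rw [show Finset.Icc 2 (s+1) = (Finset.Icc 1 s).map (addRightEmbedding 1) from
    (Finset.map_add_right_Icc 1 s 1).symm, Finset.sum_map]
  rfl

set_option maxHeartbeats 2000000 in
theorem stmt14 (n s : ℕ) (hs : 1 ≤ s) (d : ℕ → ℕ)
    (hd : ∀ j ∈ Finset.Icc 1 (s + 1), 2 ≤ d j)
    (heven : ∀ j ∈ Finset.Icc 2 s, Even (d j))
    (hsum : ∑ j ∈ Finset.Icc 1 (s + 1), d j = n) :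
    ∀ b : ℕ → ℝ,
      (∑ j ∈ jumpSet d s, |b j|) -
        (∑ j ∈ Finset.Icc 2 n \ jumpSet d s, |b j|) = 1 →
      (∑ i ∈ Finset.Icc 1 n, (csum b i) ^ 2) / n ≥
        1 / ((n : ℝ) / d 1 + (∑ j ∈ Finset.Icc 2 s, 4 * (n : ℝ) / d j) +
          (n : ℝ) / d (s + 1)) := by
  intro b hb
  -- half lengths
  set e : ℕ → ℕ := fun j => if 2 ≤ j ∧ j ≤ s then d j / 2 else d j with hedef
  set r : ℕ → ℕ := fun j => d j - e j with hrdef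
  set Q := ∑ i ∈ Finset.Icc 1 n, (csum b i) ^ 2 with hQdef
  set K := 1/(d 1 : ℝ) + (∑ j ∈ Finset.Icc 2 s, 4/(d j : ℝ)) + 1/(d (s+1) : ℝ) with hKdef
  -- basic arithmetic facts
  have he_le : ∀ j, e j ≤ d j := by
    intro j; rw [hedef]; dsimp only; split
    · exact Nat.div_le_self _ _
    · exact le_rfl
  have hre : ∀ j, r j + e j = d j := by
    intro j; rw [hrdef]; dsimp only; have := he_le j; omega
  have he_pos : ∀ j, 1 ≤ j → j ≤ s + 1 → 1 ≤ e j := by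
    intro j h1 h2
    have := hd j (by rw [Finset.mem_Icc]; omega)
    rw [hedef]; dsimp only; split <;> omega
  have heq : ∀ j, 2 ≤ j → j ≤ s → e j = r j ∧ 2 * e j = d j := by
    intro j h1 h2
    obtain ⟨m, hm⟩ := heven j (by rw [Finset.mem_Icc]; omega)
    have hej : e j = d j / 2 := by rw [hedef]; dsimp only; rw [if_pos ⟨h1, h2⟩]
    have := hre j
    omega
  have hpd : ∀ j, 1 ≤ j → pos d (j-1) + d j = pos d j := by
    intro j hj
    have h1 : j - 1 + 1 = j := by omega
    have h2 := pos_succ d (j - 1)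
    rw [h1] at h2; omega
  have hpn : pos d (s+1) = n := hsum
  have hplen : ∀ j, j ≤ s + 1 → pos d j ≤ n := fun j hj => hpn ▸ pos_mono d hj
  have hplt : ∀ x y, x < y → y ≤ s + 1 → pos d x + 2 ≤ pos d y := by
    intro x y hxy hy
    have h1 := hpd y (by omega)
    have h2 : pos d x ≤ pos d (y-1) := pos_mono d (by omega)
    have h3 := hd y (by rw [Finset.mem_Icc]; omega)
    omega
  have hn2 : 2 ≤ n := by
    have := hplt 0 (s+1) (by omega) le_rfl
    rw [pos_zero] at this; omega
  -- the interval families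
  set Rset : ℕ → Finset ℕ := fun j => Finset.Icc (pos d (j-1) + r j + 1) (pos d j) with hRdef
  set Lset : ℕ → Finset ℕ := fun j => Finset.Icc (pos d (j-1) + 1) (pos d (j-1) + e j) with hLdef
  set Vset : ℕ → Finset ℕ := fun j => Rset j ∪ Lset (j+1) with hVdef
  set Wset : ℕ → Finset ℕ := fun j =>
    Finset.Icc (pos d (j-1) + r j + 2) (pos d j) ∪
      Finset.Icc (pos d j + 2) (pos d j + e (j+1)) with hWdef
  have hRcard : ∀ j, 1 ≤ j → (Rset j).card = e j := by
    intro j hj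
    rw [hRdef]; dsimp only; rw [Nat.card_Icc]
    have := hpd j hj; have := hre j; omega
  have hLcard : ∀ j, (Lset j).card = e j := by
    intro j; rw [hLdef]; dsimp only; rw [Nat.card_Icc]; omega
  -- V facts
  have hVsub : ∀ j ∈ Finset.Icc 1 s, Vset j ⊆ Finset.Icc 1 n := by
    intro j hj k hk
    rw [Finset.mem_Icc] at hj
    have h1 := hplen j (by omega)
    have h2 := hplen (j+1) (by omega)
    have h3 := hpd (j+1) (by omega)
    have h4 := he_le (j+1)
    simp only [hVdef, hRdef, hLdef, Finset.mem_union, Finset.mem_Icc,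
      Nat.add_sub_cancel] at hk
    rw [Finset.mem_Icc]
    simp only [Nat.add_sub_cancel] at h3
    omega
  have hVd : ∀ x y, 1 ≤ x → x < y → y ≤ s → Disjoint (Vset x) (Vset y) := by
    intro x y hx hxy hys
    have hkey : pos d x + e (x+1) < pos d (y-1) + r y + 1 := by
      by_cases hc : y = x + 1
      · subst hc
        have h1 := (heq (x+1) (by omega) (by omega)).1
        simp only [Nat.add_sub_cancel]
        omega
      · have h1 : pos d (x+1) ≤ pos d (y-1) := pos_mono d (by omega)
        have h2 := hpd (x+1) (by omega)
        have h3 := he_le (x+1)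
        simp only [Nat.add_sub_cancel] at h2
        omega
    refine Finset.disjoint_left.mpr ?_
    intro k hk hk'
    have hdy := hpd y (by omega)
    have hrey := hre y
    simp only [hVdef, hRdef, hLdef, Finset.mem_union, Finset.mem_Icc,
      Nat.add_sub_cancel] at hk hk'
    omega
  have hVpd : Set.PairwiseDisjoint ↑(Finset.Icc 1 s) Vset := by
    intro x hx y hy hxy
    simp only [Finset.coe_Icc, Set.mem_Icc] at hx hy
    rcases lt_or_gt_of_ne hxy with h | h
    · exact hVd x y hx.1 h hy.2
    · exact (hVd y x hy.1 h hx.2).symm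
  -- W facts
  have hWsubV : ∀ j, Wset j ⊆ Vset j := by
    intro j k hk
    simp only [hWdef, hVdef, hRdef, hLdef, Finset.mem_union, Finset.mem_Icc,
      Nat.add_sub_cancel] at hk ⊢
    omega
  have hWpd : Set.PairwiseDisjoint ↑(Finset.Icc 1 s) Wset := by
    intro x hx y hy hxy
    exact (hVpd hx hy hxy).mono (hWsubV x) (hWsubV y)
  have hWsub : ∀ j ∈ Finset.Icc 1 s, Wset j ⊆ Finset.Icc 2 n \ jumpSet d s := by
    intro j hj k hk
    rw [Finset.mem_Icc] at hj
    have h1 := hplen j (by omega)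
    have h2 := hplen (j+1) (by omega)
    have h3 := hpd (j+1) (by omega)
    have h4 := he_le (j+1)
    have h5 := hpd j (by omega)
    have h6 := hre j
    simp only [Nat.add_sub_cancel] at h3
    simp only [hWdef, Finset.mem_union, Finset.mem_Icc] at hk
    rw [Finset.mem_sdiff, Finset.mem_Icc]
    constructor
    · omega
    · intro hmem
      simp only [jumpSet, Finset.mem_image, Finset.mem_Icc] at hmem
      obtain ⟨j', ⟨hj'1, hj'2⟩, hj'eq⟩ := hmem
      rcases lt_trichotomy j' j with h | h | h
      · have : pos d j' ≤ pos d (j-1) := pos_mono d (by omega)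
        omega
      · subst h; omega
      · have : pos d (j+1) ≤ pos d j' := pos_mono d (by omega)
        omega
  -- rewrite of the jump sum
  have hA : ∑ x ∈ jumpSet d s, |b x| = ∑ j ∈ Finset.Icc 1 s, |b (pos d j + 1)| := by
    rw [jumpSet, Finset.sum_image]
    intro x hx y hy hxy
    rw [Finset.mem_coe, Finset.mem_Icc] at hx hy
    dsimp only at hxy
    by_contra hne
    rcases lt_or_gt_of_ne hne with h | h
    · have := hplt x y h (by omega); omega
    · have := hplt y x h (by omega); omega
  -- the K sum
  have hKsum : ∑ j ∈ Finset.Icc 1 s, (1/(e j : ℝ) + 1/(e (j+1) : ℝ)) = K := by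
    rw [Finset.sum_add_distrib]
    have h2 : ∑ j ∈ Finset.Icc 1 s, 1/(e (j+1) : ℝ)
        = ∑ j ∈ Finset.Icc 2 (s+1), 1/(e j : ℝ) := (reindex_aux s (fun j => 1/(e j : ℝ))).symm
    have h3 : ∑ j ∈ Finset.Icc 2 (s+1), 1/(e j : ℝ)
        = (∑ j ∈ Finset.Icc 2 s, 1/(e j : ℝ)) + 1/(e (s+1) : ℝ) :=
      Finset.sum_Icc_succ_top (by omega) _
    have h1 : ∑ j ∈ Finset.Icc 1 s, 1/(e j : ℝ)
        = 1/(e 1 : ℝ) + ∑ j ∈ Finset.Icc 2 s, 1/(e j : ℝ) := by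
      rw [show Finset.Icc 1 s = insert 1 (Finset.Icc 2 s) from by
        ext x; simp only [Finset.mem_Icc, Finset.mem_insert]; omega,
        Finset.sum_insert (by simp)]
    have he1 : e 1 = d 1 := by rw [hedef]; dsimp only; rw [if_neg (by omega)]
    have hes : e (s+1) = d (s+1) := by rw [hedef]; dsimp only; rw [if_neg (by omega)]
    have hSS : (∑ j ∈ Finset.Icc 2 s, 1/(e j : ℝ)) + (∑ j ∈ Finset.Icc 2 s, 1/(e j : ℝ))
        = ∑ j ∈ Finset.Icc 2 s, 4/(d j : ℝ) := by
      rw [← Finset.sum_add_distrib]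
      refine Finset.sum_congr rfl ?_
      intro j hj
      rw [Finset.mem_Icc] at hj
      have h2e := (heq j hj.1 hj.2).2
      have hepos : (0:ℝ) < (e j : ℝ) := by
        exact_mod_cast he_pos j (by omega) (by omega)
      have hde : (d j : ℝ) = 2 * (e j : ℝ) := by exact_mod_cast h2e.symm
      rw [hde]
      field_simp
      ring
    rw [h1, h2, h3, he1, hes, hKdef]
    linarith [hSS]
  -- main parametric inequality
  have hQ0 : 0 ≤ Q := Finset.sum_nonneg fun i _ => sq_nonneg _
  have main : ∀ t : ℝ, 0 < t → 2 ≤ t * Q + (1/t) * K := by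
    intro t ht
    have key : ∀ j ∈ Finset.Icc 1 s,
        |b (pos d j + 1)| ≤ t/2 * (∑ i ∈ Vset j, (csum b i) ^ 2)
          + (1/t)/2 * (1/(e j : ℝ) + 1/(e (j+1) : ℝ)) + ∑ k ∈ Wset j, |b k| := by
      intro j hj
      rw [Finset.mem_Icc] at hj
      obtain ⟨hj1, hjs⟩ := hj
      have hpdj := hpd j hj1
      have hpdj1 := hpd (j+1) (by omega)
      simp only [Nat.add_sub_cancel] at hpdj1
      have hrej := hre j
      have hej := he_pos j (by omega) (by omega)
      have hej1 := he_pos (j+1) (by omega) (by omega)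
      have hej1le := he_le (j+1)
      have hRne : (Rset j).Nonempty := by
        rw [hRdef]; exact Finset.nonempty_Icc.mpr (by omega)
      have hLne : (Lset (j+1)).Nonempty := by
        rw [hLdef]; dsimp only; rw [Nat.add_sub_cancel]
        exact Finset.nonempty_Icc.mpr (by omega)
      obtain ⟨i, hiR, hmin⟩ := Finset.exists_min_image (Rset j) (fun x => |csum b x|) hRne
      obtain ⟨i', hiL, hmin'⟩ := Finset.exists_min_image (Lset (j+1)) (fun x => |csum b x|) hLne
      have hiRb : pos d (j-1) + r j + 1 ≤ i ∧ i ≤ pos d j := by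
        rw [hRdef] at hiR; exact Finset.mem_Icc.mp hiR
      have hiLb : pos d j + 1 ≤ i' ∧ i' ≤ pos d j + e (j+1) := by
        rw [hLdef] at hiL; dsimp only at hiL; rw [Nat.add_sub_cancel] at hiL
        exact Finset.mem_Icc.mp hiL
      -- minimum bounds
      have hepos : (0:ℝ) < (e j : ℝ) := by exact_mod_cast hej
      have hepos1 : (0:ℝ) < (e (j+1) : ℝ) := by exact_mod_cast hej1
      have hminbR : |csum b i| ≤ (t * (∑ x ∈ Rset j, (csum b x) ^ 2) + (1/t) * (1/(e j : ℝ)))/2 := by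
        apply amgm_aux (abs_nonneg _) (by positivity) (by positivity)
        have hR1 : |csum b i| ^ 2 * (e j : ℝ) ≤ ∑ x ∈ Rset j, (csum b x) ^ 2 := by
          have h1 : ∀ x ∈ Rset j, |csum b i| ^ 2 ≤ (csum b x) ^ 2 := by
            intro x hx
            calc |csum b i| ^ 2 ≤ |csum b x| ^ 2 :=
                  pow_le_pow_left₀ (abs_nonneg _) (hmin x hx) 2
              _ = (csum b x) ^ 2 := sq_abs _
          calc |csum b i| ^ 2 * (e j : ℝ)
              = ((Rset j).card : ℝ) * |csum b i| ^ 2 := by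
                rw [hRcard j hj1]; ring
            _ = ∑ _x ∈ Rset j, |csum b i| ^ 2 := by
                rw [Finset.sum_const, nsmul_eq_mul]
            _ ≤ ∑ x ∈ Rset j, (csum b x) ^ 2 := Finset.sum_le_sum h1
        have hxy : t * (∑ x ∈ Rset j, (csum b x) ^ 2) * ((1/t) * (1/(e j : ℝ)))
            = (∑ x ∈ Rset j, (csum b x) ^ 2) / (e j : ℝ) := by
          have ht0 : t ≠ 0 := ne_of_gt ht
          have he0 : (e j : ℝ) ≠ 0 := ne_of_gt hepos
          field_simp
        rw [hxy, le_div_iff₀ hepos]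
        exact hR1
      have hminbL : |csum b i'| ≤ (t * (∑ x ∈ Lset (j+1), (csum b x) ^ 2) + (1/t) * (1/(e (j+1) : ℝ)))/2 := by
        apply amgm_aux (abs_nonneg _) (by positivity) (by positivity)
        have hL1 : |csum b i'| ^ 2 * (e (j+1) : ℝ) ≤ ∑ x ∈ Lset (j+1), (csum b x) ^ 2 := by
          have h1 : ∀ x ∈ Lset (j+1), |csum b i'| ^ 2 ≤ (csum b x) ^ 2 := by
            intro x hx
            calc |csum b i'| ^ 2 ≤ |csum b x| ^ 2 :=
                  pow_le_pow_left₀ (abs_nonneg _) (hmin' x hx) 2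
              _ = (csum b x) ^ 2 := sq_abs _
          calc |csum b i'| ^ 2 * (e (j+1) : ℝ)
              = ((Lset (j+1)).card : ℝ) * |csum b i'| ^ 2 := by
                rw [hLcard (j+1)]; ring
            _ = ∑ _x ∈ Lset (j+1), |csum b i'| ^ 2 := by
                rw [Finset.sum_const, nsmul_eq_mul]
            _ ≤ ∑ x ∈ Lset (j+1), (csum b x) ^ 2 := Finset.sum_le_sum h1
        have hxy : t * (∑ x ∈ Lset (j+1), (csum b x) ^ 2) * ((1/t) * (1/(e (j+1) : ℝ)))
            = (∑ x ∈ Lset (j+1), (csum b x) ^ 2) / (e (j+1) : ℝ) := by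
          have ht0 : t ≠ 0 := ne_of_gt ht
          have he0 : (e (j+1) : ℝ) ≠ 0 := ne_of_gt hepos1
          field_simp
        rw [hxy, le_div_iff₀ hepos1]
        exact hL1
      -- telescoping
      have ht1 : csum b (pos d j + 1) - csum b (pos d j) = b (pos d j + 1) := by
        rw [csum_sub b (Nat.le_succ _),
          show Finset.Ioc (pos d j) (pos d j + 1) = {pos d j + 1} from by
            ext x; simp only [Finset.mem_Ioc, Finset.mem_singleton]; omega,
          Finset.sum_singleton]
      have ht2 : csum b (pos d j) - csum b i = ∑ k ∈ Finset.Ioc i (pos d j), b k :=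
        csum_sub b hiRb.2
      have ht3 : csum b i' - csum b (pos d j + 1) = ∑ k ∈ Finset.Ioc (pos d j + 1) i', b k :=
        csum_sub b hiLb.1
      have habs : |b (pos d j + 1)| ≤ |csum b i| + |csum b i'|
          + ((∑ k ∈ Finset.Ioc i (pos d j), |b k|)
            + (∑ k ∈ Finset.Ioc (pos d j + 1) i', |b k|)) := by
        have e1 : b (pos d j + 1) = csum b i' - (∑ k ∈ Finset.Ioc (pos d j + 1) i', b k)
            - csum b i - (∑ k ∈ Finset.Ioc i (pos d j), b k) := by
          linarith [ht1, ht2, ht3]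
        have a1 := abs_sub (csum b i' - (∑ k ∈ Finset.Ioc (pos d j + 1) i', b k)
            - csum b i) (∑ k ∈ Finset.Ioc i (pos d j), b k)
        have a2 := abs_sub (csum b i' - (∑ k ∈ Finset.Ioc (pos d j + 1) i', b k)) (csum b i)
        have a3 := abs_sub (csum b i') (∑ k ∈ Finset.Ioc (pos d j + 1) i', b k)
        have a4 := Finset.abs_sum_le_sum_abs b (Finset.Ioc i (pos d j))
        have a5 := Finset.abs_sum_le_sum_abs b (Finset.Ioc (pos d j + 1) i')
        rw [e1]
        linarith
      -- bound the TV pieces by the W sums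
      have hw1 : ∑ k ∈ Finset.Ioc i (pos d j), |b k|
          ≤ ∑ k ∈ Finset.Icc (pos d (j-1) + r j + 2) (pos d j), |b k| := by
        apply Finset.sum_le_sum_of_subset_of_nonneg
        · intro k hk
          rw [Finset.mem_Ioc] at hk; rw [Finset.mem_Icc]; omega
        · intro k _ _; exact abs_nonneg _
      have hw2 : ∑ k ∈ Finset.Ioc (pos d j + 1) i', |b k|
          ≤ ∑ k ∈ Finset.Icc (pos d j + 2) (pos d j + e (j+1)), |b k| := by
        apply Finset.sum_le_sum_of_subset_of_nonneg
        · intro k hk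
          rw [Finset.mem_Ioc] at hk; rw [Finset.mem_Icc]; omega
        · intro k _ _; exact abs_nonneg _
      have hwsum : ∑ k ∈ Wset j, |b k|
          = (∑ k ∈ Finset.Icc (pos d (j-1) + r j + 2) (pos d j), |b k|)
            + (∑ k ∈ Finset.Icc (pos d j + 2) (pos d j + e (j+1)), |b k|) := by
        rw [hWdef]; dsimp only
        apply Finset.sum_union
        refine Finset.disjoint_left.mpr ?_
        intro k hk hk'
        rw [Finset.mem_Icc] at hk hk'
        omega
      have hVsum : ∑ x ∈ Vset j, (csum b x) ^ 2
          = (∑ x ∈ Rset j, (csum b x) ^ 2) + (∑ x ∈ Lset (j+1), (csum b x) ^ 2) := by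
        rw [hVdef]; dsimp only
        apply Finset.sum_union
        refine Finset.disjoint_left.mpr ?_
        intro k hk hk'
        rw [hRdef] at hk; rw [hLdef] at hk'; dsimp only at hk hk'
        rw [Nat.add_sub_cancel] at hk'
        rw [Finset.mem_Icc] at hk hk'
        omega
      rw [hVsum, hwsum]
      have hfin : t/2 * ((∑ x ∈ Rset j, (csum b x) ^ 2) + (∑ x ∈ Lset (j+1), (csum b x) ^ 2))
          + (1/t)/2 * (1/(e j : ℝ) + 1/(e (j+1) : ℝ))
          = (t * (∑ x ∈ Rset j, (csum b x) ^ 2) + (1/t) * (1/(e j : ℝ)))/2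
            + (t * (∑ x ∈ Lset (j+1), (csum b x) ^ 2) + (1/t) * (1/(e (j+1) : ℝ)))/2 := by
        ring
      linarith [hminbR, hminbL, hw1, hw2, habs]
    -- sum the key inequality
    have hsk := Finset.sum_le_sum key
    have hrhs : ∑ j ∈ Finset.Icc 1 s, (t/2 * (∑ i ∈ Vset j, (csum b i) ^ 2)
          + (1/t)/2 * (1/(e j : ℝ) + 1/(e (j+1) : ℝ)) + ∑ k ∈ Wset j, |b k|)
        = t/2 * (∑ j ∈ Finset.Icc 1 s, ∑ i ∈ Vset j, (csum b i) ^ 2)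
          + (1/t)/2 * (∑ j ∈ Finset.Icc 1 s, (1/(e j : ℝ) + 1/(e (j+1) : ℝ)))
          + ∑ j ∈ Finset.Icc 1 s, ∑ k ∈ Wset j, |b k| := by
      rw [Finset.sum_add_distrib, Finset.sum_add_distrib, Finset.mul_sum, Finset.mul_sum]
    have hQV : ∑ j ∈ Finset.Icc 1 s, ∑ i ∈ Vset j, (csum b i) ^ 2 ≤ Q := by
      rw [← Finset.sum_biUnion hVpd, hQdef]
      exact Finset.sum_le_sum_of_subset_of_nonneg
        (Finset.biUnion_subset.mpr hVsub) (fun i _ _ => sq_nonneg _)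
    have hBW : ∑ j ∈ Finset.Icc 1 s, ∑ k ∈ Wset j, |b k|
        ≤ ∑ k ∈ Finset.Icc 2 n \ jumpSet d s, |b k| := by
      rw [← Finset.sum_biUnion hWpd]
      exact Finset.sum_le_sum_of_subset_of_nonneg
        (Finset.biUnion_subset.mpr hWsub) (fun i _ _ => abs_nonneg _)
    rw [hrhs, hKsum] at hsk
    rw [hA] at hb
    have ht2 : (0:ℝ) ≤ t/2 := by positivity
    have ht3 : (0:ℝ) ≤ (1/t)/2 := by positivity
    have h5 : t/2 * (∑ j ∈ Finset.Icc 1 s, ∑ i ∈ Vset j, (csum b i) ^ 2) ≤ t/2 * Q :=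
      mul_le_mul_of_nonneg_left hQV ht2
    -- conclude 1 ≤ t/2 * Q + (1/t)/2 * K, then scale
    nlinarith [hsk, hb, hBW, h5]
  -- endgame
  have hd1 : 2 ≤ d 1 := hd 1 (by rw [Finset.mem_Icc]; omega)
  have hds : 2 ≤ d (s+1) := hd (s+1) (by rw [Finset.mem_Icc]; omega)
  have hd1R : (0:ℝ) < (d 1 : ℝ) := by exact_mod_cast (by omega : 0 < d 1)
  have hdsR : (0:ℝ) < (d (s+1) : ℝ) := by exact_mod_cast (by omega : 0 < d (s+1))
  have hK0 : 0 < K := by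
    rw [hKdef]
    have h1 : (0:ℝ) < 1/(d 1 : ℝ) := by positivity
    have h2 : (0:ℝ) ≤ ∑ j ∈ Finset.Icc 2 s, 4/(d j : ℝ) :=
      Finset.sum_nonneg fun j _ => by positivity
    have h3 : (0:ℝ) ≤ 1/(d (s+1) : ℝ) := by positivity
    linarith
  have hQK : 1 ≤ Q * K := by
    rcases eq_or_lt_of_le hQ0 with hq | hq
    · exfalso
      have h := main K hK0
      have h1 : (1/K) * K = 1 := by field_simp
      rw [← hq] at h
      nlinarith
    · have hu : 0 < Real.sqrt Q := Real.sqrt_pos.mpr hq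
      have hv : 0 < Real.sqrt K := Real.sqrt_pos.mpr hK0
      have hu2 : Real.sqrt Q ^ 2 = Q := Real.sq_sqrt hQ0
      have hv2 : Real.sqrt K ^ 2 = K := Real.sq_sqrt hK0.le
      have h := main (Real.sqrt K / Real.sqrt Q) (by positivity)
      have e1 : (Real.sqrt K / Real.sqrt Q) * Q = Real.sqrt Q * Real.sqrt K := by
        field_simp
        linear_combination (-1:ℝ) * hu2
      have e2 : (1/(Real.sqrt K / Real.sqrt Q)) * K = Real.sqrt Q * Real.sqrt K := by
        field_simp
        linear_combination (-1:ℝ) * hv2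
      rw [e1, e2] at h
      nlinarith [h, hu, hv, hu2, hv2]
  have hn0 : (0:ℝ) < (n : ℝ) := by exact_mod_cast (by omega : 0 < n)
  have hD : (n : ℝ)/(d 1 : ℝ) + (∑ j ∈ Finset.Icc 2 s, 4 * (n : ℝ)/(d j : ℝ))
      + (n : ℝ)/(d (s+1) : ℝ) = (n : ℝ) * K := by
    rw [hKdef]
    rw [mul_add, mul_add, Finset.mul_sum]
    congr 1
    · congr 1
      · ring
      · exact Finset.sum_congr rfl fun j _ => by ring
    · ring
  rw [hD, ge_iff_le, div_le_div_iff₀ (mul_pos hn0 hK0) hn0]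
  nlinarith [hQK, hn0]
end

section
/- (KKT comparison inequality.) Let ε ∈ ℝⁿ, λ ≥ λ* > 0. Suppose β̂ satisfies X^T X(β̂ − β⁰) + λζ̂ = X^T ε with ζ̂ ∈ ∂‖β̂‖₁, and β* satisfies X^T X(β* − β⁰) + λ*ζ* = 0 with ζ* ∈ ∂‖β*‖₁. Then ‖X(β̂ − β*)‖₂² + λ‖β̂‖₁ − λ* β̂^T ζ* ≤ (β̂ − β*)^T X^T ε + (λ − λ*)‖β*‖₁. -/
open Finset
open Matrix

lemma sumA {n p : ℕ} (X : Matrix (Fin n) (Fin p) ℝ) (v : Fin p → ℝ) :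
    ∑ j, v j * ((X.transpose * X).mulVec v) j = qf X v := by
  have h : ∑ j, v j * ((X.transpose * X).mulVec v) j = v ⬝ᵥ (X.transpose * X).mulVec v := rfl
  rw [h, ← Matrix.mulVec_mulVec, Matrix.dotProduct_mulVec, Matrix.vecMul_transpose]
  simp [qf, dotProduct, sq]

lemma sumB {n p : ℕ} (X : Matrix (Fin n) (Fin p) ℝ) (v : Fin p → ℝ) (eps : Fin n → ℝ) :
    ∑ j, v j * (X.transpose.mulVec eps) j = ∑ i, X.mulVec v i * eps i := by
  have h : ∑ j, v j * (X.transpose.mulVec eps) j = v ⬝ᵥ X.transpose.mulVec eps := rfl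
  rw [h, Matrix.dotProduct_mulVec, Matrix.vecMul_transpose]
  rfl

theorem stmt18 {n p : ℕ} (X : Matrix (Fin n) (Fin p) ℝ) (eps : Fin n → ℝ)
    (lam lams : ℝ) (hlams : 0 < lams) (hle : lams ≤ lam)
    (beta0 betah betas zetah zetas : Fin p → ℝ)
    (hKKTh : ∀ j, ((X.transpose * X).mulVec (betah - beta0)) j + lam * zetah j =
      (X.transpose.mulVec eps) j)
    (hzetah1 : ∀ j, |zetah j| ≤ 1)
    (hzetah2 : (∑ j, zetah j * betah j) = l1 betah)
    (hKKTs : ∀ j, ((X.transpose * X).mulVec (betas - beta0)) j + lams * zetas j = 0)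
    (hzetas1 : ∀ j, |zetas j| ≤ 1)
    (hzetas2 : (∑ j, zetas j * betas j) = l1 betas) :
    qf X (betah - betas) + lam * l1 betah - lams * (∑ j, betah j * zetas j) ≤
      (∑ i, X.mulVec (betah - betas) i * eps i) + (lam - lams) * l1 betas := by
  set v : Fin p → ℝ := betah - betas with hv
  have hdiff : ∀ j, ((X.transpose * X).mulVec v) j + lam * zetah j - lams * zetas j =
      (X.transpose.mulVec eps) j := by
    intro j
    have h1 := hKKTh j
    have h2 := hKKTs j
    have heq : betah - beta0 = v + (betas - beta0) := by
      funext k; simp [hv]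
    rw [heq, Matrix.mulVec_add, Pi.add_apply] at h1
    linarith
  have key : qf X v + lam * (∑ j, zetah j * v j) - lams * (∑ j, zetas j * v j) =
      ∑ i, X.mulVec v i * eps i := by
    have := congrArg (fun w => ∑ j, v j * w j)
      (funext hdiff : (fun j => ((X.transpose * X).mulVec v) j + lam * zetah j - lams * zetas j)
        = fun j => (X.transpose.mulVec eps) j)
    simp only at this
    rw [← sumB X v eps, ← this, ← sumA X v]
    simp only [Finset.mul_sum]
    rw [← Finset.sum_add_distrib, ← Finset.sum_sub_distrib]
    congr 1; ext j; ring
  have hzv : ∑ j, zetah j * v j = l1 betah - ∑ j, zetah j * betas j := by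
    rw [← hzetah2, ← Finset.sum_sub_distrib]
    congr 1; ext j; simp [hv]; ring
  have hsv : ∑ j, zetas j * v j = ∑ j, zetas j * betah j - l1 betas := by
    rw [← hzetas2, ← Finset.sum_sub_distrib]
    congr 1; ext j; simp [hv]; ring
  have hbd : ∑ j, zetah j * betas j ≤ l1 betas := by
    apply Finset.sum_le_sum
    intro j _
    calc zetah j * betas j ≤ |zetah j * betas j| := le_abs_self _
      _ = |zetah j| * |betas j| := abs_mul _ _
      _ ≤ 1 * |betas j| := by
          exact mul_le_mul_of_nonneg_right (hzetah1 j) (abs_nonneg _)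
      _ = |betas j| := one_mul _
  have hcomm : ∑ j, betah j * zetas j = ∑ j, zetas j * betah j := by
    congr 1; ext j; ring
  have hlam0 : (0:ℝ) ≤ lam := le_of_lt (lt_of_lt_of_le hlams hle)
  rw [hzv, hsv] at key
  rw [hcomm]
  nlinarith [key, mul_le_mul_of_nonneg_left hbd hlam0]
end
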